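/- arXiv:1510.07000 — 9 statements merged into one kernel-verified Lean document; each statement's English description precedes it below -/
import Mathlib

section
/- Let F_{q'} be a finite field whose characteristic is not 2 or 3 and which contains F_{p^2} (i.e., q' = p^{2m} for the characteristic p). Let a, b ∈ F_{q'} and suppose the homogeneous quadratic form F(x,y,z) = 2(x^2 + y^2 + xy - axz - ayz) + (a^2 - b)z^2 factors as a product of two linear forms over the algebraic closure of F_{q'}. Then F factors as a product of two linear forms with coefficients in F_{q'}. -/
open MvPolynomial

/-- Auxiliary: if the six coefficient equations hold, the quadratic form factors. -/
lemma factor_aux {F : Type*} [CommRing F] (a b c0 c1 c2 d0 d1 d2 : F)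
    (h1 : c0 * d0 = 2) (h2 : c1 * d1 = 2) (h3 : c0 * d1 + c1 * d0 = 2)
    (h4 : c0 * d2 + c2 * d0 = -(2 * a)) (h5 : c1 * d2 + c2 * d1 = -(2 * a))
    (h6 : c2 * d2 = a ^ 2 - b) :
    (C (2 : F) * (X 0 ^ 2 + X 1 ^ 2 + X 0 * X 1 - C a * X 0 * X 2 - C a * X 1 * X 2)
        + C (a ^ 2 - b) * X 2 ^ 2 : MvPolynomial (Fin 3) F)
      = (C c0 * X 0 + C c1 * X 1 + C c2 * X 2) *
          (C d0 * X 0 + C d1 * X 1 + C d2 * X 2) := by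
  have e : (C c0 * X 0 + C c1 * X 1 + C c2 * X 2) *
          (C d0 * X 0 + C d1 * X 1 + C d2 * X 2)
      = C (c0 * d0) * X 0 ^ 2 + C (c0 * d1 + c1 * d0) * (X 0 * X 1)
        + C (c1 * d1) * X 1 ^ 2 + C (c0 * d2 + c2 * d0) * (X (0 : Fin 3) * X 2)
        + C (c1 * d2 + c2 * d1) * (X (1 : Fin 3) * X 2) + C (c2 * d2) * X 2 ^ 2 := by
    simp only [map_mul, map_add]
    ring
  rw [e, h1, h2, h3, h4, h5, h6]
  simp only [map_neg, map_mul, map_sub, map_pow, map_ofNat]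
  ring

/-- If the homogeneous quadratic form
`F(x,y,z) = 2(x² + y² + xy − axz − ayz) + (a² − b)z²` over a finite field of
cardinality `p^{2m}` (`p` prime, `p > 3`) factors as a product of two linear
forms over the algebraic closure, then it factors as a product of two linear
forms over the field itself. -/
theorem stmt_2 (p m : ℕ) (hp : p.Prime) (hp3 : 3 < p) (hm : 0 < m)
    (F : Type*) [Field F] [Fintype F] (hcard : Fintype.card F = p ^ (2 * m))
    (a b : F)
    (hfac : ∃ c0 c1 c2 d0 d1 d2 : AlgebraicClosure F,
      MvPolynomial.map (algebraMap F (AlgebraicClosure F))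
        ((C (2 : F) * (X 0 ^ 2 + X 1 ^ 2 + X 0 * X 1 - C a * X 0 * X 2 - C a * X 1 * X 2)
          + C (a ^ 2 - b) * X 2 ^ 2 : MvPolynomial (Fin 3) F))
        = (C c0 * X 0 + C c1 * X 1 + C c2 * X 2) *
            (C d0 * X 0 + C d1 * X 1 + C d2 * X 2)) :
    ∃ c0 c1 c2 d0 d1 d2 : F,
      (C (2 : F) * (X 0 ^ 2 + X 1 ^ 2 + X 0 * X 1 - C a * X 0 * X 2 - C a * X 1 * X 2)
          + C (a ^ 2 - b) * X 2 ^ 2 : MvPolynomial (Fin 3) F)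
        = (C c0 * X 0 + C c1 * X 1 + C c2 * X 2) *
            (C d0 * X 0 + C d1 * X 1 + C d2 * X 2) := by
  classical
  obtain ⟨c0, c1, c2, d0, d1, d2, heq⟩ := hfac
  have ev : ∀ v : Fin 3 → AlgebraicClosure F,
      (2 : AlgebraicClosure F) * ((v 0) ^ 2 + (v 1) ^ 2 + v 0 * v 1
          - algebraMap F (AlgebraicClosure F) a * v 0 * v 2
          - algebraMap F (AlgebraicClosure F) a * v 1 * v 2)
        + ((algebraMap F (AlgebraicClosure F) a) ^ 2 - algebraMap F (AlgebraicClosure F) b)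
            * (v 2) ^ 2
      = (c0 * v 0 + c1 * v 1 + c2 * v 2) * (d0 * v 0 + d1 * v 1 + d2 * v 2) := by
    intro v
    have h := congrArg (eval v) heq
    simpa only [map_mul, map_add, map_sub, map_pow, map_ofNat, MvPolynomial.map_C,
      MvPolynomial.map_X, eval_mul, eval_add, eval_sub, eval_pow, eval_C, eval_X] using h
  set A := algebraMap F (AlgebraicClosure F) a with hA
  set B := algebraMap F (AlgebraicClosure F) b with hB
  have h1 : c0 * d0 = 2 := by
    have := ev ![1, 0, 0]; simp at this; linear_combination -this
  have h2 : c1 * d1 = 2 := by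
    have := ev ![0, 1, 0]; simp at this; linear_combination -this
  have h6 : c2 * d2 = A ^ 2 - B := by
    have := ev ![0, 0, 1]; simp at this; linear_combination -this
  have f12 : c0 * d1 + c1 * d0 = 2 := by
    have := ev ![1, 1, 0]; simp at this; linear_combination -this - h1 - h2
  have f13 : c0 * d2 + c2 * d0 = -(2 * A) := by
    have := ev ![1, 0, 1]; simp at this; linear_combination -this - h1 - h6
  have f23 : c1 * d2 + c2 * d1 = -(2 * A) := by
    have := ev ![0, 1, 1]; simp at this; linear_combination -this - h2 - h6
  -- characteristic of F is p
  have hp0 : (p : F) = 0 := by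
    have h0 : ((p : F)) ^ (2 * m) = 0 := by
      rw [← Nat.cast_pow, ← hcard]
      exact FiniteField.cast_card_eq_zero F
    exact pow_eq_zero_iff (Nat.mul_ne_zero two_ne_zero hm.ne') |>.mp h0
  have hchar : ringChar F = p := CharP.ringChar_of_prime_eq_zero hp hp0
  haveI : CharP F p := hchar ▸ ringChar.charP F
  haveI : CharP (AlgebraicClosure F) p := inferInstance
  haveI : Fact p.Prime := ⟨hp⟩
  have hp2 : p ≠ 2 := by omega
  have hndvd : ∀ n : ℕ, 0 < n → n < p → (n : F) ≠ 0 := by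
    intro n hn hnp h
    have hd : p ∣ n := (CharP.cast_eq_zero_iff F p n).mp h
    have := Nat.le_of_dvd hn hd
    omega
  have h2ne : (2 : F) ≠ 0 := by
    have := hndvd 2 (by norm_num) (by omega); exact_mod_cast this
  have h3ne : (3 : F) ≠ 0 := by
    have := hndvd 3 (by norm_num) (by omega); exact_mod_cast this
  have h4K : (4 : AlgebraicClosure F) ≠ 0 := by
    intro h
    have hd : p ∣ 4 := (CharP.cast_eq_zero_iff (AlgebraicClosure F) p 4).mp (by exact_mod_cast h)
    have hd2 : p ∣ 2 := hp.dvd_of_dvd_pow (show p ∣ 2 ^ 2 by norm_num; exact hd)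
    have := Nat.le_of_dvd (by norm_num) hd2
    omega
  have hdet4 : 4 * (A ^ 2 - 3 * B) = 0 := by
    linear_combination (-1 : AlgebraicClosure F) * (
      4 * ((c1 * d1) * (c2 * d2) * h1 + 2 * (c2 * d2) * h2 + 4 * h6)
      + ((c0 * d2 + c2 * d0) * (c1 * d2 + c2 * d1) * f12 + 2 * (c1 * d2 + c2 * d1) * f13
          - 4 * A * f23)
      - ((c1 * d2 + c2 * d1) ^ 2 * h1 + 2 * ((c1 * d2 + c2 * d1) - 2 * A) * f23)
      - ((c0 * d2 + c2 * d0) ^ 2 * h2 + 2 * ((c0 * d2 + c2 * d0) - 2 * A) * f13)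
      - ((c0 * d1 + c1 * d0) ^ 2 * h6 + (A ^ 2 - B) * ((c0 * d1 + c1 * d0) + 2) * f12))
  have hdet : A ^ 2 = 3 * B := by
    have := (mul_eq_zero.mp hdet4).resolve_left h4K
    linear_combination this
  have hab : a ^ 2 = 3 * b := by
    apply (algebraMap F (AlgebraicClosure F)).injective
    rw [map_pow, map_mul, map_ofNat]
    exact hdet
  have hneg3 : (-3 : F) ≠ 0 := neg_ne_zero.mpr h3ne
  -- -3 is a square in F
  have hm3p : (-3 : F) ^ (p - 1) = 1 := by
    have hz : ((-3 : ZMod p)) ≠ 0 := by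
      intro h
      have h3 : ((3 : ℕ) : ZMod p) = 0 := by
        have := neg_eq_zero.mp h
        exact_mod_cast this
      have := Nat.le_of_dvd (by norm_num) ((ZMod.natCast_eq_zero_iff 3 p).mp h3)
      omega
    have hzp : (-3 : ZMod p) ^ (p - 1) = 1 := ZMod.pow_card_sub_one_eq_one hz
    have := congrArg (ZMod.castHom (dvd_refl p) F) hzp
    simpa only [map_pow, map_neg, map_ofNat, map_one] using this
  have hdiv : 2 * (p - 1) ∣ p ^ (2 * m) - 1 := by
    have hA1 : p ^ 2 - 1 ∣ p ^ (2 * m) - 1 := by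
      have := Nat.sub_dvd_pow_sub_pow (p ^ 2) 1 m
      simpa [← pow_mul] using this
    refine dvd_trans ?_ hA1
    obtain ⟨k, hk⟩ : 2 ∣ p + 1 := by
      have := hp.two_le
      rcases Nat.even_or_odd p with he | ho
      · exfalso; exact hp2 ((Nat.Prime.even_iff hp).mp he)
      · obtain ⟨j, hj⟩ := ho; omega
    obtain ⟨n, rfl⟩ : ∃ n, p = n + 1 := ⟨p - 1, by omega⟩
    refine ⟨k, ?_⟩
    have e1 : (n + 1) ^ 2 = n ^ 2 + 2 * n + 1 := by ring
    have e2 : n ^ 2 + 2 * n = n * (n + 2) := by ring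
    have e3 : n + 2 = 2 * k := by omega
    have e4 : n + 1 - 1 = n := rfl
    calc (n + 1) ^ 2 - 1 = n ^ 2 + 2 * n := by omega
      _ = n * (2 * k) := by rw [e2, e3]
      _ = 2 * (n + 1 - 1) * k := by rw [e4]; ring
  obtain ⟨k, hk⟩ := hdiv
  have hqodd : p ^ (2 * m) % 2 = 1 :=
    Nat.odd_iff.mp ((hp.odd_of_ne_two hp2).pow)
  have hppos : 1 ≤ p ^ (2 * m) := Nat.one_le_pow _ _ hp.pos
  obtain ⟨t, ht⟩ : ∃ t, (p - 1) * k = t := ⟨_, rfl⟩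
  have hk' : p ^ (2 * m) - 1 = 2 * t := by rw [← ht, hk]; ring
  have hhalf : Fintype.card F / 2 = (p - 1) * k := by
    rw [hcard, ht]; omega
  have hsq : IsSquare (-3 : F) := by
    rw [FiniteField.isSquare_iff (by rw [hchar]; exact hp2) hneg3, hhalf, pow_mul, hm3p,
      one_pow]
  obtain ⟨s, hs⟩ := hsq
  -- now construct the factorization; ω = (1+s)/2 is a primitive 6th root
  refine ⟨-s, -s * ((1 + s) / 2), a * ((1 + s) / 2 - 1),
    2 * s / 3, 2 * s * (1 - (1 + s) / 2) / 3, -2 * a * ((1 + s) / 2) / 3, ?_⟩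
  apply factor_aux
  · field_simp
    linear_combination (1 : F) * hs
  · field_simp
    linear_combination (4 - s ^ 2) * hs
  · field_simp
    linear_combination (2 : F) * hs
  · field_simp
    linear_combination (-2 * a) * hs
  · field_simp
    linear_combination (-4 * a) * hs
  · field_simp
    linear_combination (a ^ 2) * hs - 2 * hab
end

section
/- Let p be a prime with p > 3, let h, M0 be positive integers with q = p^h, and suppose p^{2hM0} is sufficiently large. Then there exists a Sidon set S in the additive group G = {f ∈ F_q[t] : deg f < 4M0} such that every g ∈ G can be written as g = s1 + s2 + s3 with s1, s2, s3 ∈ S pairwise distinct. -/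
open Polynomial


lemma sq_fiber_card_le {K : Type} [Field K] [Fintype K] [DecidableEq K] (e : K) :
    (Finset.univ.filter fun n : K => n * n = e).card ≤ 2 := by
  rcases (Finset.univ.filter fun n : K => n * n = e).eq_empty_or_nonempty with h | ⟨s, hs⟩
  · simp [h]
  · have hs' : s * s = e := (Finset.mem_filter.1 hs).2
    have hsub : (Finset.univ.filter fun n : K => n * n = e) ⊆ {s, -s} := by
      intro x hx
      have hx' : x * x = e := (Finset.mem_filter.1 hx).2
      have : (x - s) * (x + s) = 0 := by linear_combination hx' - hs'
      rcases mul_eq_zero.1 this with h | h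
      · simp [sub_eq_zero.1 h]
      · simp [eq_neg_of_add_eq_zero_left h]
    calc _ ≤ ({s, -s} : Finset K).card := Finset.card_le_card hsub
      _ ≤ 2 := (Finset.card_insert_le _ _).trans (by simp)

lemma inner_solve {K : Type} [Field K] [Fintype K]
    (h2 : (2:K) ≠ 0) (h3 : (3:K) ≠ 0) {θ : K} (hθ : θ * θ = -3)
    (hcard : 8 ≤ Fintype.card K) (c0 : K) :
    ∃ a b : K, a*a + a*b + b*b = c0 ∧ a ≠ b ∧ 2*a + b ≠ 0 ∧ a + 2*b ≠ 0 := by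
  classical
  have hθ0 : θ ≠ 0 := by
    intro h; rw [h] at hθ; apply h3; linear_combination hθ
  have h12 : (12:K) ≠ 0 := by
    have : (12:K) = 2 * 2 * 3 := by norm_num
    rw [this]; exact mul_ne_zero (mul_ne_zero h2 h2) h3
  have hθm3 : θ - 3 ≠ 0 := by
    intro h; apply h12; have h' : θ = 3 := by linear_combination h
    rw [h'] at hθ; linear_combination hθ
  have hθp3 : θ + 3 ≠ 0 := by
    intro h; apply h12; have h' : θ = -3 := by linear_combination h
    rw [h'] at hθ; linear_combination hθ
  obtain ⟨n, hn0, hne1, hne2, hne3⟩ :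
      ∃ n : K, n ≠ 0 ∧ n*n ≠ -c0*(θ+3)/(θ-3) ∧ n*n ≠ -c0 ∧ n*n ≠ -c0*(θ-3)/(θ+3) := by
    by_contra hc
    have hsub : (Finset.univ : Finset K) ⊆
        insert (0:K) ((Finset.univ.filter fun n : K => n * n = -c0*(θ+3)/(θ-3)) ∪
          (Finset.univ.filter fun n : K => n * n = -c0) ∪
          (Finset.univ.filter fun n : K => n * n = -c0*(θ-3)/(θ+3))) := by
      intro x _
      by_contra hx
      simp only [Finset.mem_insert, Finset.mem_union, Finset.mem_filter, Finset.mem_univ,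
        true_and] at hx
      push_neg at hx
      exact hc ⟨x, hx.1, hx.2.1.1, hx.2.1.2, hx.2.2⟩
    have h1 := Finset.card_le_card hsub
    rw [Finset.card_univ] at h1
    have h2' := Finset.card_insert_le (0:K)
        ((Finset.univ.filter fun n : K => n * n = -c0*(θ+3)/(θ-3)) ∪
          (Finset.univ.filter fun n : K => n * n = -c0) ∪
          (Finset.univ.filter fun n : K => n * n = -c0*(θ-3)/(θ+3)))
    have h3' := Finset.card_union_le
        ((Finset.univ.filter fun n : K => n * n = -c0*(θ+3)/(θ-3)) ∪
          (Finset.univ.filter fun n : K => n * n = -c0))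
        (Finset.univ.filter fun n : K => n * n = -c0*(θ-3)/(θ+3))
    have h4' := Finset.card_union_le
        (Finset.univ.filter fun n : K => n * n = -c0*(θ+3)/(θ-3))
        (Finset.univ.filter fun n : K => n * n = -c0)
    have c1 := sq_fiber_card_le (-c0*(θ+3)/(θ-3))
    have c2 := sq_fiber_card_le (-c0)
    have c3 := sq_fiber_card_le (-c0*(θ-3)/(θ+3))
    omega
  obtain ⟨m, hnm⟩ : ∃ m : K, n * m = c0 := ⟨c0 / n, mul_div_cancel₀ _ hn0⟩
  obtain ⟨b, hb⟩ : ∃ b : K, θ * b = n - m := ⟨(n - m) / θ, mul_div_cancel₀ _ hθ0⟩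
  obtain ⟨a, ha⟩ : ∃ a : K, 2 * a = n + m - b := ⟨(n + m - b) / 2, mul_div_cancel₀ _ h2⟩
  have h4 : (4:K) * (a*a + a*b + b*b) = (n+m)*(n+m) + 3*(b*b) := by
    linear_combination (2*a + n + m + b) * ha
  have h5 : (3:K) * (b*b) = -((n-m)*(n-m)) := by
    linear_combination -(θ*b + (n-m))*hb + b*b*hθ
  have h4ne : (4:K) ≠ 0 := by
    have : (4:K) = 2 * 2 := by norm_num
    rw [this]; exact mul_ne_zero h2 h2
  have key : a*a + a*b + b*b = c0 := by
    apply mul_left_cancel₀ h4ne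
    linear_combination h4 + h5 + 4*hnm
  refine ⟨a, b, key, ?_, ?_, ?_⟩
  · intro h
    apply hne1
    rw [eq_div_iff hθm3]
    have h' : θ*(n+m) = 3*(n-m) := by linear_combination 3*hb - θ*ha + 2*θ*h
    linear_combination n*h' - (θ+3)*hnm
  · intro h
    apply hne2
    have h' : n + m = 0 := by linear_combination h - ha
    linear_combination n*h' - hnm
  · intro h
    apply hne3
    rw [eq_div_iff hθp3]
    have h' : θ*(n+m) + 3*(n-m) = 0 := by linear_combination 2*θ*h - θ*ha - 3*hb
    linear_combination n*h' - (θ-3)*hnm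

lemma solve3 {K : Type} [Field K] [Fintype K]
    (h2 : (2:K) ≠ 0) (h3 : (3:K) ≠ 0) {θ : K} (hθ : θ * θ = -3)
    (hcard : 8 ≤ Fintype.card K) (u v : K) :
    ∃ x y z : K, x ≠ y ∧ x ≠ z ∧ y ≠ z ∧ x + y + z = u ∧ x*x + y*y + z*z = v := by
  have h6 : (6:K) ≠ 0 := by
    have : (6:K) = 2 * 3 := by norm_num
    rw [this]; exact mul_ne_zero h2 h3
  have h9 : (9:K) ≠ 0 := by
    have : (9:K) = 3 * 3 := by norm_num
    rw [this]; exact mul_ne_zero h3 h3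
  obtain ⟨c0, hc0⟩ : ∃ c0 : K, 6 * c0 = 3*v - u*u := ⟨(3*v - u*u)/6, mul_div_cancel₀ _ h6⟩
  obtain ⟨u3, hu3⟩ : ∃ u3 : K, 3 * u3 = u := ⟨u/3, mul_div_cancel₀ _ h3⟩
  obtain ⟨a, b, key, hab, h2ab, hab2⟩ := inner_solve h2 h3 hθ hcard c0
  refine ⟨u3 + a, u3 + b, u3 - a - b, ?_, ?_, ?_, by linear_combination hu3, ?_⟩
  · intro h; exact hab (by linear_combination h)
  · intro h; exact h2ab (by linear_combination h)
  · intro h; exact hab2 (by linear_combination h)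
  · apply mul_left_cancel₀ h9
    linear_combination 18*key + 3*hc0 + (9*u3 + 3*u)*hu3


lemma exists_theta {K : Type} [Field K] [Fintype K] (p k : ℕ) [Fact p.Prime]
    [CharP K p] (hp3 : 3 < p) (hk : 0 < k) (hcard : Fintype.card K = p ^ (2*k)) :
    ∃ θ : K, θ * θ = -3 := by
  have hp : p.Prime := Fact.out
  have h3 : (3:K) ≠ 0 := by
    have hnd : ¬ (p ∣ 3) := by
      intro h; have := Nat.le_of_dvd (by norm_num) h; omega
    have : ((3:ℕ):K) ≠ 0 := fun h => hnd ((CharP.cast_eq_zero_iff K p 3).1 h)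
    exact_mod_cast this
  have ha : (-3:K) ≠ 0 := by simpa using h3
  have hodd : p % 2 = 1 := by
    rcases hp.eq_two_or_odd with h | h
    · omega
    · exact h
  have hfrob : (-3:K) ^ p = -3 := by
    have h1 : frobenius K p ((-3 : ℤ) : K) = ((-3 : ℤ) : K) := map_intCast _ _
    have h2 : ((-3 : ℤ) : K) = (-3 : K) := by push_cast; ring
    rw [h2] at h1
    simpa [frobenius_def] using h1
  have hp1 : (-3:K) ^ (p - 1) = 1 := by
    have hps : p - 1 + 1 = p := Nat.succ_pred_eq_of_pos hp.pos
    have h' : (-3:K) ^ (p - 1) * (-3) = -3 := by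
      rw [← pow_succ, hps, hfrob]
    exact mul_right_cancel₀ ha (h'.trans (one_mul (-3:K)).symm)
  set t : ℕ := ∑ i ∈ Finset.range (2*k), p ^ i with htdef
  have ht : (p - 1) * t = p ^ (2*k) - 1 := by
    have hz : ((t : ℤ)) * ((p:ℤ) - 1) = (p:ℤ) ^ (2*k) - 1 := by
      rw [htdef]; push_cast; exact geom_sum_mul _ _
    have hp1' : 1 ≤ p := hp.pos
    have hpk : 1 ≤ p ^ (2*k) := Nat.one_le_pow _ _ hp.pos
    have hcast : ((p - 1) * t : ℕ) = ((p ^ (2*k) - 1 : ℕ) : ℤ) := by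
      push_cast [hp1', hpk]
      linarith [hz]
    exact_mod_cast hcast
  have ht2 : 2 ∣ t := by
    have hp2 : ((p : ZMod 2)) = 1 := by
      have hpe : p = 2 * (p/2) + 1 := by omega
      rw [hpe]; push_cast; simp
      left; decide
    have hz : ((t : ZMod 2)) = 0 := by
      rw [htdef]; push_cast [hp2]
      simp
      left; decide
    exact (ZMod.natCast_eq_zero_iff t 2).1 hz
  obtain ⟨t', ht'⟩ := ht2
  have hC : p ^ (2*k) - 1 = 2 * ((p-1) * t') := by
    rw [← ht, ht']; ring
  have hQdiv : Fintype.card K / 2 = (p-1) * t' := by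
    have hpk : 1 ≤ p ^ (2*k) := Nat.one_le_pow _ _ hp.pos
    rw [hcard]; omega
  have hpow : (-3:K) ^ (Fintype.card K / 2) = 1 := by
    rw [hQdiv, pow_mul, hp1, one_pow]
  have hchar2 : ringChar K ≠ 2 := by rw [ringChar.eq K p]; omega
  obtain ⟨θ, hθ⟩ := (FiniteField.isSquare_iff hchar2 ha).2 hpow
  exact ⟨θ, hθ.symm⟩


lemma exists_addEquiv (p : ℕ) [Fact p.Prime] (A B : Type) [AddCommGroup A] [AddCommGroup B]
    [Module (ZMod p) A] [Module (ZMod p) B] [Fintype A] [Fintype B]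
    (h : Fintype.card A = Fintype.card B) : Nonempty (A ≃+ B) := by
  have hA : Fintype.card A = (Fintype.card (ZMod p)) ^ Module.finrank (ZMod p) A :=
    Module.card_eq_pow_finrank
  have hB : Fintype.card B = (Fintype.card (ZMod p)) ^ Module.finrank (ZMod p) B :=
    Module.card_eq_pow_finrank
  have hp2 : 2 ≤ Fintype.card (ZMod p) := by
    rw [ZMod.card]; exact (Fact.out : p.Prime).two_le
  have hfr : Module.finrank (ZMod p) A = Module.finrank (ZMod p) B :=
    Nat.pow_right_injective hp2 (by dsimp only; rw [← hA, ← hB, h])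
  obtain ⟨e⟩ := FiniteDimensional.nonempty_linearEquiv_of_finrank_eq
    (R := ZMod p) (M := A) (M' := B) hfr
  exact ⟨e.toAddEquiv⟩


/-- For `p` prime with `p > 3`, `q = p^h`, and `p^{2hM0}` sufficiently large,
there exists a Sidon set `S` in `G = {f ∈ F_q[t] : deg f < 4M0}` such that
every `g ∈ G` is a sum of three pairwise distinct elements of `S`. -/
theorem stmt_5 : ∃ Cbound : ℕ, ∀ (p h M0 : ℕ), p.Prime → 3 < p → 0 < h → 0 < M0 →
    Cbound ≤ p ^ (2 * h * M0) →
    ∀ (F : Type) [Field F] [Fintype F], Fintype.card F = p ^ h →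
    ∃ S : Set (Polynomial F),
      (∀ f ∈ S, f.degree < (4 * M0 : ℕ)) ∧
      (∀ a ∈ S, ∀ b ∈ S, ∀ c ∈ S, ∀ d ∈ S,
        a - b = c - d → a - b ≠ 0 → a = c ∧ b = d) ∧
      (∀ g : Polynomial F, g.degree < (4 * M0 : ℕ) →
        ∃ s1 ∈ S, ∃ s2 ∈ S, ∃ s3 ∈ S,
          s1 ≠ s2 ∧ s1 ≠ s3 ∧ s2 ≠ s3 ∧ s1 + s2 + s3 = g) := by
  refine ⟨8, ?_⟩
  intro p h M0 hp hp3 hh hM0 hbound F _ _ hcardF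
  haveI : Fact p.Prime := ⟨hp⟩
  -- the auxiliary field K of cardinality p^(2*h*M0)
  set n : ℕ := 2 * h * M0 with hndef
  have hn0 : n ≠ 0 := by positivity
  let K : Type := GaloisField p n
  letI : Fintype K := Fintype.ofFinite K
  have hcardK : Fintype.card K = p ^ n := by
    rw [← Nat.card_eq_fintype_card]; exact GaloisField.card p n hn0
  -- char facts in K
  have hndvd : ∀ m : ℕ, 0 < m → m < p → (m : K) ≠ 0 := by
    intro m hm1 hmp hz
    have hdvd := (CharP.cast_eq_zero_iff K p m).1 hz
    have := Nat.le_of_dvd hm1 hdvd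
    omega
  have h2K : (2:K) ≠ 0 := by
    have := hndvd 2 (by norm_num) (by omega); exact_mod_cast this
  have h3K : (3:K) ≠ 0 := by
    have := hndvd 3 (by norm_num) (by omega); exact_mod_cast this
  obtain ⟨θ, hθ⟩ : ∃ θ : K, θ * θ = -3 := by
    refine exists_theta p (h * M0) hp3 (by positivity) ?_
    rw [hcardK, hndef, mul_assoc]
  have h8K : 8 ≤ Fintype.card K := by rw [hcardK]; exact hbound
  -- char of F
  have hpF : (p : F) = 0 := by
    have h1 : ((Fintype.card F : ℕ) : F) = 0 := FiniteField.cast_card_eq_zero F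
    rw [hcardF] at h1
    push_cast at h1
    exact pow_eq_zero_iff (by omega) |>.1 h1
  have hcharF : CharP F p := by
    have hdvd : ringChar F ∣ p := ringChar.dvd (by exact_mod_cast hpF)
    rcases hp.eq_one_or_self_of_dvd _ hdvd with h1 | h1
    · exact absurd h1 (CharP.ringChar_ne_one)
    · exact ringChar.of_eq h1
  haveI := hcharF
  letI : Algebra (ZMod p) F := ZMod.algebra F p
  -- the target space V
  let V := Polynomial.degreeLT F (4 * M0)
  letI : Module (ZMod p) V := Module.compHom V (algebraMap (ZMod p) (F))
  let e : (Fin (4 * M0) → F) ≃ V := (Polynomial.degreeLTEquiv F (4 * M0)).symm.toEquiv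
  letI : Fintype V := Fintype.ofEquiv _ e
  have hcardV : Fintype.card V = p ^ (h * (4 * M0)) := by
    rw [← Fintype.card_congr e, Fintype.card_fun, hcardF, Fintype.card_fin, ← pow_mul]
  have hcards : Fintype.card (K × K) = Fintype.card V := by
    rw [Fintype.card_prod, hcardK, hcardV, ← pow_add]
    congr 1
    rw [hndef]; ring
  obtain ⟨φ⟩ := exists_addEquiv p (K × K) V hcards
  -- the map into polynomials
  let ψ : K × K → Polynomial F := fun w => ((φ w : V) : Polynomial F)
  have hψsub : ∀ w1 w2, ψ w1 - ψ w2 = ψ (w1 - w2) := by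
    intro w1 w2; simp only [ψ, map_sub]; rfl
  have hψadd : ∀ w1 w2, ψ w1 + ψ w2 = ψ (w1 + w2) := by
    intro w1 w2; simp only [ψ, map_add]; rfl
  have hψinj : Function.Injective ψ := by
    intro w1 w2 hw
    exact φ.injective (Subtype.ext hw)
  refine ⟨Set.range (fun x : K => ψ (x, x*x)), ?_, ?_, ?_⟩
  · rintro f ⟨x, rfl⟩
    exact Polynomial.mem_degreeLT.1 (φ (x, x*x)).2
  · rintro a ⟨x1, rfl⟩ b ⟨x2, rfl⟩ c ⟨x3, rfl⟩ d ⟨x4, rfl⟩ heq hne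
    simp only at heq hne ⊢
    rw [hψsub, hψsub] at heq
    have hkey := hψinj heq
    have hd1 : x1 - x2 = x3 - x4 := congrArg Prod.fst hkey
    have hd2 : x1*x1 - x2*x2 = x3*x3 - x4*x4 := congrArg Prod.snd hkey
    have hx12 : x1 ≠ x2 := by
      rintro rfl
      apply hne
      rw [hψsub, sub_self]
      show ((φ 0 : V) : Polynomial F) = 0
      rw [map_zero]; rfl
    have hΔ : x1 - x2 ≠ 0 := sub_ne_zero.2 hx12
    have hsum : (x1 - x2) * (x1 + x2 - x3 - x4) = 0 := by
      linear_combination hd2 - (x3 + x4) * hd1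
    have hs : x1 + x2 - x3 - x4 = 0 := by
      rcases mul_eq_zero.1 hsum with hc | hc
      · exact absurd hc hΔ
      · exact hc
    have h13 : x1 = x3 := by
      have h2x : (2:K) * (x1 - x3) = 0 := by linear_combination hs + hd1
      rcases mul_eq_zero.1 h2x with hc | hc
      · exact absurd hc h2K
      · exact sub_eq_zero.1 hc
    have h24 : x2 = x4 := by
      have : x2 - x4 = 0 := by rw [h13] at hd1; linear_combination -hd1
      exact sub_eq_zero.1 this
    subst h13; subst h24
    exact ⟨rfl, rfl⟩
  · intro g hg
    have hgmem : g ∈ Polynomial.degreeLT F (4 * M0) := Polynomial.mem_degreeLT.2 hg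
    set w : K × K := φ.symm ⟨g, hgmem⟩ with hwdef
    obtain ⟨x, y, z, hxy, hxz, hyz, hsum, hsq⟩ := solve3 h2K h3K hθ h8K w.1 w.2
    refine ⟨ψ (x, x*x), ⟨x, rfl⟩, ψ (y, y*y), ⟨y, rfl⟩, ψ (z, z*z), ⟨z, rfl⟩, ?_, ?_, ?_, ?_⟩
    · intro hc; exact hxy (congrArg Prod.fst (hψinj hc))
    · intro hc; exact hxz (congrArg Prod.fst (hψinj hc))
    · intro hc; exact hyz (congrArg Prod.fst (hψinj hc))
    · rw [hψadd, hψadd]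
      have hw : (x, x*x) + (y, y*y) + (z, z*z) = w := by
        have : (x, x*x) + (y, y*y) + (z, z*z) = ((x + y + z : K), (x*x + y*y + z*z : K)) := rfl
        rw [this, hsum, hsq]
      rw [hw, hwdef]
      show ((φ (φ.symm ⟨g, hgmem⟩) : V) : Polynomial F) = g
      rw [AddEquiv.apply_symm_apply]
end

section
/- Let p be an odd prime, q = p^h, and M0 a sufficiently large positive integer. Then there exists a Sidon set S in G_{4M0} = {f ∈ F_q[t] : deg f < 4M0} such that every g ∈ G_{4M0} can be written as g = s1 + s2 + s3 + s4 with s1, s2, s3, s4 ∈ S pairwise distinct. -/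
open Polynomial

lemma sq_filter_card {K : Type*} [Field K] [Fintype K] [DecidableEq K] (d : K) :
    (Finset.univ.filter (fun w : K => w ^ 2 = d)).card ≤ 2 := by
  rcases (Finset.univ.filter (fun w : K => w ^ 2 = d)).eq_empty_or_nonempty with h | ⟨a, ha⟩
  · simp [h]
  · have ha' : a ^ 2 = d := (Finset.mem_filter.mp ha).2
    have hsub : (Finset.univ.filter (fun w : K => w ^ 2 = d)) ⊆ {a, -a} := by
      intro w hw
      have hw' : w ^ 2 = d := (Finset.mem_filter.mp hw).2
      have : (w - a) * (w + a) = 0 := by linear_combination hw' - ha'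
      rcases mul_eq_zero.mp this with h | h
      · simp [Finset.mem_insert, sub_eq_zero.mp h]
      · simp [Finset.mem_insert, eq_neg_of_add_eq_zero_left h]
    exact (Finset.card_le_card hsub).trans ((Finset.card_insert_le _ _).trans (by simp))

lemma exists_four {K : Type*} [Field K] [Fintype K]
    (hcard : 10 ≤ Fintype.card K) (h2 : (2 : K) ≠ 0) (hmod : Fintype.card K % 4 ≠ 3)
    (A B : K) :
    ∃ x1 x2 x3 x4 : K, x1 ≠ x2 ∧ x1 ≠ x3 ∧ x1 ≠ x4 ∧ x2 ≠ x3 ∧ x2 ≠ x4 ∧ x3 ≠ x4 ∧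
      x1 + x2 + x3 + x4 = A ∧ x1 ^ 2 + x2 ^ 2 + x3 ^ 2 + x4 ^ 2 = B := by
  classical
  obtain ⟨i, hi⟩ := FiniteField.isSquare_neg_one_iff.mpr hmod
  have hi2 : i ^ 2 = -1 := by rw [sq]; exact hi.symm
  have h4 : (4 : K) ≠ 0 := by
    intro h; apply h2
    have h22 : (2 : K) * 2 = 4 := by norm_num
    rcases mul_eq_zero.mp (h22.trans h) with h | h <;> exact h
  have hi0 : i ≠ 0 := by
    intro h; rw [h] at hi2; norm_num at hi2
  have hi1 : i - 1 ≠ 0 := by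
    intro h; rw [sub_eq_zero] at h; rw [h] at hi2
    exact h2 (by linear_combination hi2)
  have hi1' : i + 1 ≠ 0 := by
    intro h
    have hh : i = -1 := eq_neg_of_add_eq_zero_left h
    rw [hh] at hi2
    exact h2 (by linear_combination hi2)
  have h2i : (2 : K) * i ≠ 0 := mul_ne_zero h2 hi0
  obtain ⟨a, ha⟩ : ∃ a : K, a * 4 = A := ⟨A / 4, by field_simp⟩
  obtain ⟨c, hc2⟩ : ∃ c : K, c * 2 = B - 4 * a ^ 2 := ⟨(B - 4 * a ^ 2) / 2, by field_simp⟩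
  set Bad : Finset K := insert 0
    ((Finset.univ.filter (fun w : K => w ^ 2 = c)) ∪
     (Finset.univ.filter (fun w : K => w ^ 2 = -c)) ∪
     (Finset.univ.filter (fun w : K => w ^ 2 = -(i + 1) * c / (i - 1))) ∪
     (Finset.univ.filter (fun w : K => w ^ 2 = (1 - i) * c / (i + 1)))) with hBad
  have hBadcard : Bad.card ≤ 9 := by
    refine (Finset.card_insert_le _ _).trans ?_
    have h2' := (Finset.card_union_le
        ((Finset.univ.filter (fun w : K => w ^ 2 = c)) ∪
         (Finset.univ.filter (fun w : K => w ^ 2 = -c)) ∪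
         (Finset.univ.filter (fun w : K => w ^ 2 = -(i + 1) * c / (i - 1))))
        (Finset.univ.filter (fun w : K => w ^ 2 = (1 - i) * c / (i + 1))))
    have h1 := (Finset.card_union_le
        ((Finset.univ.filter (fun w : K => w ^ 2 = c)) ∪
         (Finset.univ.filter (fun w : K => w ^ 2 = -c)))
        (Finset.univ.filter (fun w : K => w ^ 2 = -(i + 1) * c / (i - 1))))
    have h0 := (Finset.card_union_le
        (Finset.univ.filter (fun w : K => w ^ 2 = c))
        (Finset.univ.filter (fun w : K => w ^ 2 = -c)))
    have c1 := sq_filter_card c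
    have c2 := sq_filter_card (-c)
    have c3 := sq_filter_card (-(i + 1) * c / (i - 1))
    have c4 := sq_filter_card ((1 - i) * c / (i + 1))
    omega
  have hex : ∃ w : K, w ∉ Bad := by
    by_contra hco
    push_neg at hco
    have hsub : (Finset.univ : Finset K) ⊆ Bad := fun w _ => hco w
    have := Finset.card_le_card hsub
    rw [Finset.card_univ] at this
    omega
  obtain ⟨w, hw⟩ := hex
  have hw0 : w ≠ 0 := fun h => hw (by simp [hBad, h])
  obtain ⟨z, hwz⟩ : ∃ z : K, w * z = c := ⟨c / w, by field_simp⟩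
  obtain ⟨u, hu⟩ : ∃ u : K, u * 2 = w + z := ⟨(w + z) / 2, by field_simp⟩
  obtain ⟨v, hv⟩ : ∃ v : K, v * (2 * i) = w - z := ⟨(w - z) / (2 * i), by field_simp⟩
  have hkey4 : (4 : K) * (u ^ 2 + v ^ 2) = 4 * c := by
    linear_combination 4 * hwz + (u * 2 + w + z) * hu - (v * 2 * i + w - z) * hv
      + 4 * v ^ 2 * hi2
  have hkey : u ^ 2 + v ^ 2 = c := mul_left_cancel₀ h4 hkey4
  have hu0 : u ≠ 0 := by
    intro h
    apply hw
    have hm : w ^ 2 = -c := by linear_combination 2 * w * h - w * hu - hwz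
    simp [hBad, Finset.mem_insert, Finset.mem_union, Finset.mem_filter, hm]
  have hv0 : v ≠ 0 := by
    intro h
    apply hw
    have hm : w ^ 2 = c := by linear_combination 2 * i * w * h - w * hv + hwz
    simp [hBad, Finset.mem_insert, Finset.mem_union, Finset.mem_filter, hm]
  have huv : u ≠ v := by
    intro h
    apply hw
    have hm : w ^ 2 = -(i + 1) * c / (i - 1) := by
      rw [eq_div_iff hi1]
      linear_combination w * hv - i * w * hu + 2 * w * i * h - (i + 1) * hwz
    simp [hBad, Finset.mem_insert, Finset.mem_union, Finset.mem_filter, hm]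
  have huv' : u ≠ -v := by
    intro h
    apply hw
    have hm : w ^ 2 = (1 - i) * c / (i + 1) := by
      rw [eq_div_iff hi1']
      linear_combination 2 * w * i * h - i * w * hu - w * hv - (i - 1) * hwz
    simp [hBad, Finset.mem_insert, Finset.mem_union, Finset.mem_filter, hm]
  refine ⟨a + u, a - u, a + v, a - v, ?_, ?_, ?_, ?_, ?_, ?_, ?_, ?_⟩
  · intro h
    have h2u : (2 : K) * u = 0 := by linear_combination h
    exact hu0 ((mul_eq_zero.mp h2u).resolve_left h2)
  · intro h; exact huv (by linear_combination h)
  · intro h; exact huv' (by linear_combination h)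
  · intro h; exact huv' (by linear_combination -h)
  · intro h; exact huv (by linear_combination -h)
  · intro h
    have h2v : (2 : K) * v = 0 := by linear_combination h
    exact hv0 ((mul_eq_zero.mp h2v).resolve_left h2)
  · linear_combination ha
  · linear_combination 2 * hkey + hc2

lemma addEquiv_of_card_eq (p : ℕ) [Fact p.Prime] (V W : Type*)
    [AddCommGroup V] [AddCommGroup W] [Module (ZMod p) V] [Module (ZMod p) W]
    [Fintype V] [Fintype W] (h : Fintype.card V = Fintype.card W) :
    Nonempty (V ≃+ W) := by
  have hV := Module.card_eq_pow_finrank (K := ZMod p) (V := V)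
  have hW := Module.card_eq_pow_finrank (K := ZMod p) (V := W)
  rw [ZMod.card] at hV hW
  have hpow : p ^ Module.finrank (ZMod p) V = p ^ Module.finrank (ZMod p) W := by
    rw [← hV, ← hW]; exact h
  have hfr : Module.finrank (ZMod p) V = Module.finrank (ZMod p) W :=
    Nat.pow_right_injective (Fact.out : p.Prime).two_le hpow
  obtain ⟨e⟩ := FiniteDimensional.nonempty_linearEquiv_of_finrank_eq hfr
  exact ⟨e.toAddEquiv⟩

/-- For `p` an odd prime, `q = p^h`, and `M0` sufficiently large, there exists
a Sidon set `S` in `G_{4M0} = {f ∈ F_q[t] : deg f < 4M0}` such that every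
`g ∈ G_{4M0}` is a sum of four pairwise distinct elements of `S`. -/
theorem stmt_6 (p h : ℕ) (hp : p.Prime) (hodd : p ≠ 2) (hh : 0 < h) :
    ∃ Cbound : ℕ, ∀ M0 : ℕ, Cbound ≤ M0 →
    ∀ (F : Type) [Field F] [Fintype F], Fintype.card F = p ^ h →
    ∃ S : Set (Polynomial F),
      (∀ f ∈ S, f.degree < (4 * M0 : ℕ)) ∧
      (∀ a ∈ S, ∀ b ∈ S, ∀ c ∈ S, ∀ d ∈ S,
        a - b = c - d → a - b ≠ 0 → a = c ∧ b = d) ∧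
      (∀ g : Polynomial F, g.degree < (4 * M0 : ℕ) →
        ∃ s1 ∈ S, ∃ s2 ∈ S, ∃ s3 ∈ S, ∃ s4 ∈ S,
          s1 ≠ s2 ∧ s1 ≠ s3 ∧ s1 ≠ s4 ∧ s2 ≠ s3 ∧ s2 ≠ s4 ∧ s3 ≠ s4 ∧
          s1 + s2 + s3 + s4 = g) := by
  haveI : Fact p.Prime := ⟨hp⟩
  have hp3 : 3 ≤ p := by
    have := hp.two_le; omega
  refine ⟨2, fun M0 hM0 F _ _ hF => ?_⟩
  -- `F` has characteristic `p`
  haveI : CharP F (ringChar F) := ringChar.charP F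
  obtain ⟨n, hrp, hcard⟩ := FiniteField.card F (ringChar F)
  have hdvd : ringChar F ∣ p ^ h := by
    rw [← hF, hcard]; exact dvd_pow_self _ n.ne_zero
  have hr_eq : ringChar F = p :=
    (Nat.prime_dvd_prime_iff_eq hrp hp).mp (hrp.dvd_of_dvd_pow hdvd)
  haveI hcharF : CharP F p := hr_eq ▸ ringChar.charP F
  -- the auxiliary field `K`
  set K := GaloisField p (h * (2 * M0)) with hK
  haveI : Fintype K := Fintype.ofFinite K
  have hexp0 : h * (2 * M0) ≠ 0 := by positivity
  have cardK : Fintype.card K = p ^ (h * (2 * M0)) := by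
    have := GaloisField.card p (h * (2 * M0)) hexp0
    rwa [Nat.card_eq_fintype_card] at this
  have hcard10 : 10 ≤ Fintype.card K := by
    rw [cardK]
    calc (10 : ℕ) ≤ 3 ^ 4 := by norm_num
    _ ≤ 3 ^ (h * (2 * M0)) := Nat.pow_le_pow_right (by norm_num) (by nlinarith)
    _ ≤ p ^ (h * (2 * M0)) := Nat.pow_le_pow_left hp3 _
  have hmod : Fintype.card K % 4 ≠ 3 := by
    have hop : Odd (p ^ (h * M0)) := (hp.odd_of_ne_two hodd).pow
    obtain ⟨m, hm⟩ := hop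
    have hsq : Fintype.card K = 4 * (m * m + m) + 1 := by
      rw [cardK]
      have : h * (2 * M0) = (h * M0) * 2 := by ring
      rw [this, pow_mul, hm]; ring
    omega
  have h2K : (2 : K) ≠ 0 := by
    intro h20
    have hdvd2 : p ∣ 2 := by
      have := (CharP.cast_eq_zero_iff K p 2).mp (by exact_mod_cast h20)
      exact this
    have := Nat.le_of_dvd (by norm_num) hdvd2
    omega
  -- additive equivalence
  letI : Algebra (ZMod p) F := ZMod.algebra F p
  have cardeq : Fintype.card (K × K) = Fintype.card (Fin (4 * M0) → F) := by
    rw [Fintype.card_prod, Fintype.card_fun, cardK, hF, Fintype.card_fin,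
      ← pow_add, ← pow_mul]
    congr 1
    ring
  obtain ⟨ψ⟩ := addEquiv_of_card_eq p (K × K) (Fin (4 * M0) → F) cardeq
  let e0 := Polynomial.degreeLTEquiv F (4 * M0)
  let φ : (K × K) ≃+ Polynomial.degreeLT F (4 * M0) := ψ.trans e0.toAddEquiv.symm
  let P : K → Polynomial F := fun x => ((φ (x, x ^ 2) : Polynomial.degreeLT F (4 * M0)) : Polynomial F)
  have hPmem : ∀ x : K, P x ∈ Polynomial.degreeLT F (4 * M0) := fun x => (φ (x, x ^ 2)).2
  have hPsub : ∀ x y : K, P x - P y = ((φ (x, x ^ 2) - φ (y, y ^ 2) : Polynomial.degreeLT F (4 * M0)) : Polynomial F) := by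
    intro x y; simp [P]
  have hPinj : Function.Injective P := by
    intro x y hxy
    have h1 : φ (x, x ^ 2) = φ (y, y ^ 2) := Subtype.coe_injective hxy
    have h2 : (x, x ^ 2) = (y, y ^ 2) := φ.injective h1
    exact congrArg Prod.fst h2
  refine ⟨Set.range P, ?_, ?_, ?_⟩
  · rintro f ⟨x, rfl⟩
    exact Polynomial.mem_degreeLT.mp (hPmem x)
  · rintro a ⟨x, rfl⟩ b ⟨y, rfl⟩ c ⟨zz, rfl⟩ d ⟨tt, rfl⟩ hsub hne
    rw [hPsub, hPsub] at hsub
    have h1 : φ (x, x ^ 2) - φ (y, y ^ 2) = φ (zz, zz ^ 2) - φ (tt, tt ^ 2) :=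
      Subtype.coe_injective hsub
    have h2 : (x, x ^ 2) - (y, y ^ 2) = ((zz, zz ^ 2) : K × K) - (tt, tt ^ 2) := by
      have := congrArg φ.symm h1
      simpa [map_sub] using this
    have hfst : x - y = zz - tt := congrArg Prod.fst h2
    have hsnd : x ^ 2 - y ^ 2 = zz ^ 2 - tt ^ 2 := congrArg Prod.snd h2
    have hxy : x ≠ y := by
      intro hxyy
      apply hne
      rw [hxyy, sub_self]
    have hxy0 : x - y ≠ 0 := sub_ne_zero.mpr hxy
    have hsum : x + y = zz + tt := by
      apply mul_left_cancel₀ hxy0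
      calc (x - y) * (x + y) = x ^ 2 - y ^ 2 := by ring
      _ = zz ^ 2 - tt ^ 2 := hsnd
      _ = (zz - tt) * (zz + tt) := by ring
      _ = (x - y) * (zz + tt) := by rw [hfst]
    have hx : x = zz := mul_left_cancel₀ h2K (by linear_combination hfst + hsum)
    have hy : y = tt := mul_left_cancel₀ h2K (by linear_combination hsum - hfst)
    exact ⟨by rw [hx], by rw [hy]⟩
  · intro g hg
    have hgmem : g ∈ Polynomial.degreeLT F (4 * M0) := Polynomial.mem_degreeLT.mpr hg
    obtain ⟨x1, x2, x3, x4, h12, h13, h14, h23, h24, h34, hsA, hsB⟩ :=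
      exists_four hcard10 h2K hmod (φ.symm ⟨g, hgmem⟩).1 (φ.symm ⟨g, hgmem⟩).2
    refine ⟨P x1, ⟨x1, rfl⟩, P x2, ⟨x2, rfl⟩, P x3, ⟨x3, rfl⟩, P x4, ⟨x4, rfl⟩,
      fun hh => h12 (hPinj hh), fun hh => h13 (hPinj hh), fun hh => h14 (hPinj hh),
      fun hh => h23 (hPinj hh), fun hh => h24 (hPinj hh), fun hh => h34 (hPinj hh), ?_⟩
    have hpair : ((x1, x1 ^ 2) : K × K) + (x2, x2 ^ 2) + (x3, x3 ^ 2) + (x4, x4 ^ 2)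
        = φ.symm ⟨g, hgmem⟩ := by
      ext
      · simpa using hsA
      · simpa using hsB
    have : P x1 + P x2 + P x3 + P x4
        = ((φ ((x1, x1 ^ 2) + (x2, x2 ^ 2) + (x3, x3 ^ 2) + (x4, x4 ^ 2)) :
            Polynomial.degreeLT F (4 * M0)) : Polynomial F) := by
      simp only [P, ← Submodule.coe_add, ← map_add]
    rw [this, hpair, φ.apply_symm_apply]
end

section
/- Let α, β be real numbers with 0 < α < 1, 0 < β < 1, and α + β > 1. Then there is a constant C depending only on α, β, q such that for every nonzero n ∈ F_q[t] and every integer M ≥ -1, the sum σ_{α,β}(n; M) = ∑_{x ∈ F_q[t], deg x > M} q^{-α deg x} · q^{-β deg(n - x)} satisfies σ_{α,β}(n; M) ≤ C · q^{-(α+β-1)·max{deg n, M}}. -/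
private noncomputable def psi {F : Type*} [Field F] (n : Polynomial F) (M : ℤ)
    (x : {x : Polynomial F // x ≠ 0 ∧ M < (x.natDegree : ℤ) ∧ n - x ≠ 0}) : Polynomial F :=
  if (x : Polynomial F).natDegree ≤ (n - (x : Polynomial F)).natDegree
    then (x : Polynomial F) else n - (x : Polynomial F)

private noncomputable def gfun {F : Type*} [Field F] [Fintype F] (α β : ℝ)
    (n : Polynomial F) (m : ℕ) : ℝ :=
  (Fintype.card F : ℝ) ^ (-α * (m : ℝ) - β * ((max m n.natDegree : ℕ) : ℝ)) +
    (Fintype.card F : ℝ) ^ (-β * (m : ℝ) - α * ((max m n.natDegree : ℕ) : ℝ))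

private lemma gfun_nonneg {F : Type*} [Field F] [Fintype F] (α β : ℝ)
    (n : Polynomial F) (m : ℕ) : 0 ≤ gfun α β n m := by
  have hQ0 : (0 : ℝ) < (Fintype.card F : ℝ) := by
    have := Fintype.card_pos (α := F); exact_mod_cast this
  exact add_nonneg (Real.rpow_pos_of_pos hQ0 _).le (Real.rpow_pos_of_pos hQ0 _).le

private lemma psi_spec {F : Type*} [Field F] [Fintype F] (α β : ℝ)
    {n : Polynomial F} {M : ℤ}
    (x : {x : Polynomial F // x ≠ 0 ∧ M < (x.natDegree : ℤ) ∧ n - x ≠ 0}) :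
    ((Fintype.card F : ℝ) ^ (-α * ((x : Polynomial F).natDegree : ℝ)) *
        (Fintype.card F : ℝ) ^ (-β * ((n - (x : Polynomial F)).natDegree : ℝ))
      ≤ gfun α β n ((psi n M x).natDegree)) ∧
      (psi n M x = (x : Polynomial F) ∨ psi n M x = n - (x : Polynomial F)) ∧
      max n.natDegree M.toNat ≤ max (psi n M x).natDegree n.natDegree := by
  have hQ0 : (0 : ℝ) < (Fintype.card F : ℝ) := by
    have := Fintype.card_pos (α := F); exact_mod_cast this
  obtain ⟨hx0, hxM, hnx0⟩ := x.2
  set d : ℕ := (x : Polynomial F).natDegree with hddef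
  set e : ℕ := (n - (x : Polynomial F)).natDegree with hedef
  set D : ℕ := n.natDegree with hDdef
  have hsum : (x : Polynomial F) + (n - (x : Polynomial F)) = n := by ring
  have hde1 : d < e → e = D := by
    intro h
    have := Polynomial.natDegree_add_eq_right_of_natDegree_lt (p := (x : Polynomial F))
      (q := n - (x : Polynomial F)) h
    rw [hsum] at this
    exact this.symm
  have hde2 : e < d → d = D := by
    intro h
    have := Polynomial.natDegree_add_eq_left_of_natDegree_lt (p := (x : Polynomial F))
      (q := n - (x : Polynomial F)) h
    rw [hsum] at this
    exact this.symm
  have hde3 : D ≤ max d e := by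
    have := Polynomial.natDegree_add_le (x : Polynomial F) (n - (x : Polynomial F))
    rw [hsum] at this
    exact this
  have hMd : M.toNat ≤ d := by omega
  have hmul : (Fintype.card F : ℝ) ^ (-α * (d : ℝ)) * (Fintype.card F : ℝ) ^ (-β * (e : ℝ))
      = (Fintype.card F : ℝ) ^ (-α * (d : ℝ) - β * (e : ℝ)) := by
    rw [← Real.rpow_add hQ0]
    ring_nf
  by_cases hcase : d ≤ e
  · have hψx : psi n M x = (x : Polynomial F) := if_pos hcase
    have hmaxde : max d D = e := by
      rcases eq_or_lt_of_le hcase with h | h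
      · omega
      · have := hde1 h
        omega
    refine ⟨?_, Or.inl hψx, ?_⟩
    · rw [hψx, ← hddef, hmul, gfun]
      have h2 : (-α * (d : ℝ) - β * (e : ℝ))
          = -α * (d : ℝ) - β * ((max d D : ℕ) : ℝ) := by rw [hmaxde]
      rw [h2]
      exact le_add_of_nonneg_right (Real.rpow_pos_of_pos hQ0 _).le
    · rw [hψx, ← hddef]
      omega
  · push_neg at hcase
    have hψx : psi n M x = n - (x : Polynomial F) := if_neg (by omega)
    have hdD : d = D := hde2 hcase
    refine ⟨?_, Or.inr hψx, ?_⟩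
    · rw [hψx, ← hedef, hmul, gfun]
      have h2 : (-α * (d : ℝ) - β * (e : ℝ))
          = -β * (e : ℝ) - α * ((max e D : ℕ) : ℝ) := by
        have hmaxde : max e D = d := by omega
        rw [hmaxde]; ring
      rw [h2]
      exact le_add_of_nonneg_left (Real.rpow_pos_of_pos hQ0 _).le
    · rw [hψx, ← hedef]
      omega

private lemma geom_finset_le {r : ℝ} (h0 : 0 ≤ r) (h1 : r < 1) (S : Finset ℕ) :
    ∑ j ∈ S, r ^ j ≤ (1 - r)⁻¹ :=
  (Summable.sum_le_tsum S (fun _ _ => pow_nonneg h0 _)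
    (summable_geometric_of_lt_one h0 h1)).trans_eq (tsum_geometric_of_lt_one h0 h1)

private lemma geom_dist_sum {r : ℝ} (h0 : 0 ≤ r) (h1 : r < 1) (K : ℕ) (T : Finset ℕ) :
    ∑ m ∈ T, r ^ (if m ≤ K then K - m else m - K) ≤ 2 * (1 - r)⁻¹ := by
  classical
  rw [← Finset.sum_filter_add_sum_filter_not T (fun m => m ≤ K)]
  have e1 : ∑ m ∈ T.filter (fun m => m ≤ K), r ^ (if m ≤ K then K - m else m - K)
      = ∑ j ∈ (T.filter (fun m => m ≤ K)).image (fun m => K - m), r ^ j := by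
    rw [Finset.sum_image (fun a ha b hb hab => by
      have ha' := (Finset.mem_filter.mp ha).2
      have hb' := (Finset.mem_filter.mp hb).2
      have hab' : K - a = K - b := hab
      omega)]
    exact Finset.sum_congr rfl fun m hm => by rw [if_pos (Finset.mem_filter.mp hm).2]
  have e2 : ∑ m ∈ T.filter (fun m => ¬ m ≤ K), r ^ (if m ≤ K then K - m else m - K)
      = ∑ j ∈ (T.filter (fun m => ¬ m ≤ K)).image (fun m => m - K), r ^ j := by
    rw [Finset.sum_image (fun a ha b hb hab => by
      have ha' := (Finset.mem_filter.mp ha).2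
      have hb' := (Finset.mem_filter.mp hb).2
      have hab' : a - K = b - K := hab
      omega)]
    exact Finset.sum_congr rfl fun m hm => by rw [if_neg (Finset.mem_filter.mp hm).2]
  rw [e1, e2, two_mul]
  exact add_le_add (geom_finset_le h0 h1 _) (geom_finset_le h0 h1 _)

private lemma card_le_pow (F : Type*) [Field F] [Fintype F] (m : ℕ) (t : Finset (Polynomial F))
    (h : ∀ p ∈ t, p.natDegree ≤ m) :
    (t.card : ℝ) ≤ (Fintype.card F : ℝ) ^ ((m : ℝ) + 1) := by
  classical
  have key : t.card ≤ Fintype.card (Fin (m + 1) → F) := by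
    have := Finset.card_le_card_of_injOn (fun p (i : Fin (m + 1)) => Polynomial.coeff p i)
      (fun p (_ : p ∈ t) => Finset.mem_univ _) (t := Finset.univ) ?_
    · simpa using this
    · intro p hp p' hp' hpp'
      ext i
      by_cases hi : i ≤ m
      · exact congrFun hpp' ⟨i, by omega⟩
      · rw [Polynomial.coeff_eq_zero_of_natDegree_lt (by have := h p hp; omega),
          Polynomial.coeff_eq_zero_of_natDegree_lt (by have := h p' hp'; omega)]
  have hcard : Fintype.card (Fin (m + 1) → F) = Fintype.card F ^ (m + 1) := by
    simp [Fintype.card_fun]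
  have : (t.card : ℝ) ≤ ((Fintype.card F ^ (m + 1) : ℕ) : ℝ) := by
    exact_mod_cast key.trans_eq hcard
  refine this.trans_eq ?_
  rw [show ((m : ℝ) + 1) = ((m + 1 : ℕ) : ℝ) by push_cast; ring, Real.rpow_natCast]
  push_cast
  ring


private lemma key_bound {Q α β ε : ℝ} (hQ1 : 1 < Q)
    (hεα : ε ≤ 1 - α) (hεβ : ε ≤ 1 - β) (hεαβ : ε ≤ α + β - 1)
    {D K m : ℕ} (hDK : D ≤ K) (hm : K ≤ max m D) :
    Q ^ ((m : ℝ) + 1) * (Q ^ (-α * (m : ℝ) - β * ((max m D : ℕ) : ℝ)) +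
        Q ^ (-β * (m : ℝ) - α * ((max m D : ℕ) : ℝ)))
      ≤ 2 * (Q * Q ^ (-(α + β - 1) * (K : ℝ))) *
          (Q ^ (-ε)) ^ (if m ≤ K then K - m else m - K) := by
  have hQ0 : (0 : ℝ) < Q := by linarith
  by_cases hmK : m ≤ K
  · have hX : max m D = K := le_antisymm (max_le hmK hDK) hm
    have hmK' : (m : ℝ) ≤ (K : ℝ) := by exact_mod_cast hmK
    have hρpow : (Q ^ (-ε)) ^ (K - m) = Q ^ (-ε * ((K : ℝ) - (m : ℝ))) := by
      rw [← Real.rpow_natCast (Q ^ (-ε)) (K - m), ← Real.rpow_mul hQ0.le]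
      congr 1
      rw [Nat.cast_sub hmK]
    have hRHSeq : 2 * (Q * Q ^ (-(α + β - 1) * (K : ℝ))) * (Q ^ (-ε)) ^ (K - m)
        = 2 * Q ^ ((1 : ℝ) - (α + β - 1) * (K : ℝ) - ε * ((K : ℝ) - (m : ℝ))) := by
      rw [hρpow, show ((1 : ℝ) - (α + β - 1) * (K : ℝ) - ε * ((K : ℝ) - (m : ℝ)))
          = (1 + -(α + β - 1) * (K : ℝ)) + (-ε * ((K : ℝ) - (m : ℝ))) by ring,
        Real.rpow_add hQ0, Real.rpow_add hQ0, Real.rpow_one]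
      ring
    rw [if_pos hmK, hRHSeq]
    have hprodα : (0 : ℝ) ≤ ((K : ℝ) - m) * (1 - α - ε) :=
      mul_nonneg (by linarith) (by linarith)
    have hprodβ : (0 : ℝ) ≤ ((K : ℝ) - m) * (1 - β - ε) :=
      mul_nonneg (by linarith) (by linarith)
    have e1 : Q ^ ((m : ℝ) + 1) * Q ^ (-α * (m : ℝ) - β * ((max m D : ℕ) : ℝ))
        ≤ Q ^ ((1 : ℝ) - (α + β - 1) * (K : ℝ) - ε * ((K : ℝ) - (m : ℝ))) := by
      rw [hX, ← Real.rpow_add hQ0]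
      apply Real.rpow_le_rpow_of_exponent_le hQ1.le
      nlinarith [hprodα]
    have e2 : Q ^ ((m : ℝ) + 1) * Q ^ (-β * (m : ℝ) - α * ((max m D : ℕ) : ℝ))
        ≤ Q ^ ((1 : ℝ) - (α + β - 1) * (K : ℝ) - ε * ((K : ℝ) - (m : ℝ))) := by
      rw [hX, ← Real.rpow_add hQ0]
      apply Real.rpow_le_rpow_of_exponent_le hQ1.le
      nlinarith [hprodβ]
    nlinarith [e1, e2]
  · push_neg at hmK
    have hX : max m D = m := max_eq_left (by omega)
    have hmK' : (K : ℝ) ≤ (m : ℝ) := by exact_mod_cast hmK.le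
    have hρpow : (Q ^ (-ε)) ^ (m - K) = Q ^ (-ε * ((m : ℝ) - (K : ℝ))) := by
      rw [← Real.rpow_natCast (Q ^ (-ε)) (m - K), ← Real.rpow_mul hQ0.le]
      congr 1
      rw [Nat.cast_sub hmK.le]
    have hRHSeq : 2 * (Q * Q ^ (-(α + β - 1) * (K : ℝ))) * (Q ^ (-ε)) ^ (m - K)
        = 2 * Q ^ ((1 : ℝ) - (α + β - 1) * (K : ℝ) - ε * ((m : ℝ) - (K : ℝ))) := by
      rw [hρpow, show ((1 : ℝ) - (α + β - 1) * (K : ℝ) - ε * ((m : ℝ) - (K : ℝ)))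
          = (1 + -(α + β - 1) * (K : ℝ)) + (-ε * ((m : ℝ) - (K : ℝ))) by ring,
        Real.rpow_add hQ0, Real.rpow_add hQ0, Real.rpow_one]
      ring
    rw [if_neg (by omega), hRHSeq]
    have hprod : (0 : ℝ) ≤ ((m : ℝ) - K) * (α + β - 1 - ε) :=
      mul_nonneg (by linarith) (by linarith)
    have e1 : Q ^ ((m : ℝ) + 1) * Q ^ (-α * (m : ℝ) - β * ((max m D : ℕ) : ℝ))
        ≤ Q ^ ((1 : ℝ) - (α + β - 1) * (K : ℝ) - ε * ((m : ℝ) - (K : ℝ))) := by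
      rw [hX, ← Real.rpow_add hQ0]
      apply Real.rpow_le_rpow_of_exponent_le hQ1.le
      nlinarith [hprod]
    have e2 : Q ^ ((m : ℝ) + 1) * Q ^ (-β * (m : ℝ) - α * ((max m D : ℕ) : ℝ))
        ≤ Q ^ ((1 : ℝ) - (α + β - 1) * (K : ℝ) - ε * ((m : ℝ) - (K : ℝ))) := by
      rw [hX, ← Real.rpow_add hQ0]
      apply Real.rpow_le_rpow_of_exponent_le hQ1.le
      nlinarith [hprod]
    nlinarith [e1, e2]

private lemma finset_bound {F : Type*} [Field F] [Fintype F] {α β ε : ℝ}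
    (hε0 : 0 < ε) (hεα : ε ≤ 1 - α) (hεβ : ε ≤ 1 - β) (hεαβ : ε ≤ α + β - 1)
    (n : Polynomial F) (M : ℤ)
    (s : Finset {x : Polynomial F // x ≠ 0 ∧ M < (x.natDegree : ℤ) ∧ n - x ≠ 0}) :
    ∑ x ∈ s, (Fintype.card F : ℝ) ^ (-α * ((x : Polynomial F).natDegree : ℝ)) *
        (Fintype.card F : ℝ) ^ (-β * ((n - (x : Polynomial F)).natDegree : ℝ))
      ≤ 8 * (Fintype.card F : ℝ) * (1 - (Fintype.card F : ℝ) ^ (-ε))⁻¹ *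
          (Fintype.card F : ℝ) ^ (-(α + β - 1) *
            ((max n.natDegree M.toNat : ℕ) : ℝ)) := by
  classical
  have hq1 : 1 < Fintype.card F := Fintype.one_lt_card
  have hQ1 : (1 : ℝ) < (Fintype.card F : ℝ) := by exact_mod_cast hq1
  have hQ0 : (0 : ℝ) < (Fintype.card F : ℝ) := lt_trans one_pos hQ1
  have hρ0 : (0 : ℝ) < (Fintype.card F : ℝ) ^ (-ε) := Real.rpow_pos_of_pos hQ0 _
  have hρ1 : (Fintype.card F : ℝ) ^ (-ε) < 1 :=
    Real.rpow_lt_one_of_one_lt_of_neg hQ1 (by linarith)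
  refine le_trans (Finset.sum_le_sum
    (fun x (_ : x ∈ s) => (psi_spec α β (n := n) (M := M) x).1)) ?_
  have step2 := Finset.sum_comp (s := s) (fun y : Polynomial F => gfun α β n y.natDegree)
    (psi n M)
  rw [step2]
  trans ∑ y ∈ s.image (psi n M), 2 * gfun α β n y.natDegree
  · refine Finset.sum_le_sum fun y hy => ?_
    rw [nsmul_eq_mul]
    refine mul_le_mul_of_nonneg_right ?_ (gfun_nonneg α β n _)
    have h2 : (((2 : ℕ) : ℝ)) = (2 : ℝ) := by norm_num
    rw [← h2, Nat.cast_le]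
    refine le_trans (Finset.card_le_card_of_injOn (fun x => (x : Polynomial F))
      (t := ({y, n - y} : Finset (Polynomial F))) ?_ ?_) ?_
    · intro x hx
      have hx' := Finset.mem_filter.mp hx
      rcases (psi_spec α β (n := n) (M := M) x).2.1 with h | h
      · simp only [Finset.mem_coe, Finset.mem_insert, Finset.mem_singleton]
        left
        rw [← hx'.2, h]
      · simp only [Finset.mem_coe, Finset.mem_insert, Finset.mem_singleton]
        right
        have h3 : n - (x : Polynomial F) = y := by rw [← hx'.2, h]
        rw [← h3]
        ring
    · intro a _ b _ hab
      exact Subtype.ext hab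
    · apply le_trans (Finset.card_insert_le _ _)
      simp
  rw [← Finset.mul_sum]
  have step4 := Finset.sum_comp (s := s.image (psi n M)) (gfun α β n) Polynomial.natDegree
  rw [step4]
  trans 2 * ∑ m ∈ (s.image (psi n M)).image Polynomial.natDegree,
      (Fintype.card F : ℝ) ^ ((m : ℝ) + 1) * gfun α β n m
  · refine mul_le_mul_of_nonneg_left (Finset.sum_le_sum fun m hm => ?_) (by norm_num)
    rw [nsmul_eq_mul]
    refine mul_le_mul_of_nonneg_right ?_ (gfun_nonneg α β n _)
    exact card_le_pow F m _ fun p hp => le_of_eq (Finset.mem_filter.mp hp).2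
  trans 2 * ∑ m ∈ (s.image (psi n M)).image Polynomial.natDegree,
      2 * ((Fintype.card F : ℝ) * (Fintype.card F : ℝ) ^ (-(α + β - 1) *
          ((max n.natDegree M.toNat : ℕ) : ℝ))) *
        ((Fintype.card F : ℝ) ^ (-ε)) ^
          (if m ≤ max n.natDegree M.toNat then max n.natDegree M.toNat - m
            else m - max n.natDegree M.toNat)
  · refine mul_le_mul_of_nonneg_left (Finset.sum_le_sum fun m hm => ?_) (by norm_num)
    obtain ⟨y, hy, hym⟩ := Finset.mem_image.mp hm
    obtain ⟨x, hx, hxy⟩ := Finset.mem_image.mp hy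
    have hKm : max n.natDegree M.toNat ≤ max m n.natDegree := by
      have h5 := (psi_spec α β (n := n) (M := M) x).2.2
      rw [hxy, hym] at h5
      exact h5
    exact key_bound hQ1 hεα hεβ hεαβ (le_max_left _ _) hKm
  calc 2 * ∑ m ∈ (s.image (psi n M)).image Polynomial.natDegree,
        2 * ((Fintype.card F : ℝ) * (Fintype.card F : ℝ) ^ (-(α + β - 1) *
            ((max n.natDegree M.toNat : ℕ) : ℝ))) *
          ((Fintype.card F : ℝ) ^ (-ε)) ^
            (if m ≤ max n.natDegree M.toNat then max n.natDegree M.toNat - m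
              else m - max n.natDegree M.toNat)
      = 4 * ((Fintype.card F : ℝ) * (Fintype.card F : ℝ) ^ (-(α + β - 1) *
            ((max n.natDegree M.toNat : ℕ) : ℝ))) *
          ∑ m ∈ (s.image (psi n M)).image Polynomial.natDegree,
            ((Fintype.card F : ℝ) ^ (-ε)) ^
              (if m ≤ max n.natDegree M.toNat then max n.natDegree M.toNat - m
                else m - max n.natDegree M.toNat) := by
        rw [← Finset.mul_sum]
        ring
    _ ≤ 4 * ((Fintype.card F : ℝ) * (Fintype.card F : ℝ) ^ (-(α + β - 1) *
            ((max n.natDegree M.toNat : ℕ) : ℝ))) *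
          (2 * (1 - (Fintype.card F : ℝ) ^ (-ε))⁻¹) := by
        refine mul_le_mul_of_nonneg_left (geom_dist_sum hρ0.le hρ1 _ _) ?_
        have := Real.rpow_pos_of_pos hQ0 (-(α + β - 1) * ((max n.natDegree M.toNat : ℕ) : ℝ))
        positivity
    _ = 8 * (Fintype.card F : ℝ) * (1 - (Fintype.card F : ℝ) ^ (-ε))⁻¹ *
          (Fintype.card F : ℝ) ^ (-(α + β - 1) *
            ((max n.natDegree M.toNat : ℕ) : ℝ)) := by ring

/-- Lemma (basic 1, part i): for `0 < α, β < 1` with `α + β > 1`, there is a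
constant `C = C(α, β, q)` such that for all nonzero `n` and all integers
`M ≥ -1`,
`σ_{α,β}(n; M) = ∑_{deg x > M} q^{-α deg x} q^{-β deg (n-x)}
  ≤ C q^{-(α+β-1) max{deg n, M}}`
(terms with `x = 0` or `n - x = 0` contribute zero). -/
theorem stmt_9 (F : Type*) [Field F] [Fintype F] (α β : ℝ)
    (hα : 0 < α) (hα1 : α < 1) (hβ : 0 < β) (hβ1 : β < 1) (hαβ : 1 < α + β) :
    ∃ C : ℝ, 0 < C ∧ ∀ (n : Polynomial F), n ≠ 0 → ∀ M : ℤ, -1 ≤ M →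
      ∑' x : {x : Polynomial F // x ≠ 0 ∧ M < (x.natDegree : ℤ) ∧ n - x ≠ 0},
          (Fintype.card F : ℝ) ^ (-α * ((x : Polynomial F).natDegree : ℝ)) *
            (Fintype.card F : ℝ) ^ (-β * ((n - (x : Polynomial F)).natDegree : ℝ))
        ≤ C * (Fintype.card F : ℝ) ^
            (-(α + β - 1) * max ((n.natDegree : ℝ)) ((M : ℝ))) := by
  classical
  have hq1 : 1 < Fintype.card F := Fintype.one_lt_card
  have hQ1 : (1 : ℝ) < (Fintype.card F : ℝ) := by exact_mod_cast hq1
  have hQ0 : (0 : ℝ) < (Fintype.card F : ℝ) := lt_trans one_pos hQ1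
  obtain ⟨ε, hε0, hεα, hεβ, hεαβ⟩ :
      ∃ ε : ℝ, 0 < ε ∧ ε ≤ 1 - α ∧ ε ≤ 1 - β ∧ ε ≤ α + β - 1 :=
    ⟨min (min (1 - α) (1 - β)) (α + β - 1),
      lt_min (lt_min (by linarith) (by linarith)) (by linarith),
      le_trans (min_le_left _ _) (min_le_left _ _),
      le_trans (min_le_left _ _) (min_le_right _ _), min_le_right _ _⟩
  have hρ0 : (0 : ℝ) < (Fintype.card F : ℝ) ^ (-ε) := Real.rpow_pos_of_pos hQ0 _
  have hρ1 : (Fintype.card F : ℝ) ^ (-ε) < 1 :=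
    Real.rpow_lt_one_of_one_lt_of_neg hQ1 (by linarith)
  have hC : (0 : ℝ) < 8 * (Fintype.card F : ℝ) * (1 - (Fintype.card F : ℝ) ^ (-ε))⁻¹ :=
    mul_pos (mul_pos (by norm_num) hQ0) (inv_pos.mpr (by linarith))
  refine ⟨8 * (Fintype.card F : ℝ) * (1 - (Fintype.card F : ℝ) ^ (-ε))⁻¹, hC, ?_⟩
  intro n hn M hM
  have hmax : max ((n.natDegree : ℝ)) ((M : ℝ)) = ((max n.natDegree M.toNat : ℕ) : ℝ) := by
    rcases le_total M ((n.natDegree : ℤ)) with h | h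
    · have hK : max n.natDegree M.toNat = n.natDegree := max_eq_left (by omega)
      rw [hK, max_eq_left]
      exact_mod_cast h
    · have h0 : (0 : ℤ) ≤ M := le_trans (Int.ofNat_nonneg n.natDegree) h
      have hK : max n.natDegree M.toNat = M.toNat := max_eq_right (by omega)
      rw [hK, max_eq_right (by exact_mod_cast h)]
      have h4 : ((M.toNat : ℤ) : ℝ) = ((M : ℤ) : ℝ) := by rw [Int.toNat_of_nonneg h0]
      exact_mod_cast h4.symm
  rw [hmax]
  exact tsum_le_of_sum_le'
    (mul_nonneg hC.le (Real.rpow_pos_of_pos hQ0 _).le)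
    (fun s => finset_bound hε0 hεα hεβ hεαβ n M s)
end

section
/- Let φ, κ be real numbers with 0 < φ < 1, 0 < κ < 1, and φ + κ > 1. Then there is a constant C depending only on φ, κ, q such that for every r ∈ F_q[t] and every integer M ≥ 0, ∑_{x ∈ F_q[t], deg x > M} q^{-φ deg x} · q^{-κ·max{deg(r+x), M}} ≤ C · q^{(1-φ-κ)·max{deg r, M}}. -/
open scoped Classical

noncomputable def dmax {F : Type*} [Field F] (f : Polynomial F) (M : ℕ) : ℕ :=
  if f = 0 then M else max f.natDegree M

lemma dmax_ge {F : Type*} [Field F] (f : Polynomial F) (M : ℕ) : M ≤ dmax f M := by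
  unfold dmax; split <;> simp

lemma natDegree_le_dmax {F : Type*} [Field F] (f : Polynomial F) (M : ℕ) :
    f.natDegree ≤ dmax f M := by
  unfold dmax; split
  · simp_all
  · exact le_max_left _ _

lemma dmax_r_le {F : Type*} [Field F] (r y : Polynomial F) (M : ℕ) :
    dmax r M ≤ max y.natDegree (dmax (r + y) M) := by
  have h1 : r.natDegree ≤ max y.natDegree (dmax (r + y) M) := by
    calc r.natDegree = ((r + y) - y).natDegree := by rw [add_sub_cancel_right]
      _ ≤ max (r + y).natDegree y.natDegree := Polynomial.natDegree_sub_le _ _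
      _ ≤ max (dmax (r + y) M) y.natDegree :=
          max_le_max (natDegree_le_dmax _ _) le_rfl
      _ = max y.natDegree (dmax (r + y) M) := max_comm _ _
  have h2 : M ≤ max y.natDegree (dmax (r + y) M) :=
    le_trans (dmax_ge (r + y) M) (le_max_right _ _)
  unfold dmax; split
  · exact h2
  · exact max_le h1 h2

lemma card_fiber_le {F : Type*} [Field F] [Fintype F] (n : ℕ) (t : Finset (Polynomial F))
    (g : Polynomial F → Polynomial F) (hg : Set.InjOn g t)
    (hdeg : ∀ x ∈ t, (g x).natDegree ≤ n) :
    t.card ≤ Fintype.card F ^ (n + 1) := by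
  have h : t.card ≤ (Finset.univ : Finset (Fin (n+1) → F)).card := by
    apply Finset.card_le_card_of_injOn (f := fun x (i : Fin (n+1)) => (g x).coeff i)
      (fun a _ => Finset.mem_univ _)
    intro a ha b hb hab
    apply hg ha hb
    ext k
    by_cases hk : k ≤ n
    · have := congrFun hab ⟨k, Nat.lt_succ_of_le hk⟩
      simpa using this
    · rw [Polynomial.coeff_eq_zero_of_natDegree_lt, Polynomial.coeff_eq_zero_of_natDegree_lt]
      · exact lt_of_le_of_lt (hdeg b hb) (Nat.lt_of_not_le hk)
      · exact lt_of_le_of_lt (hdeg a ha) (Nat.lt_of_not_le hk)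
  simpa [Fintype.card_fun] using h

lemma sum_pow_le {ρ : ℝ} (h0 : 0 ≤ ρ) (h1 : ρ < 1) (s : Finset ℕ) :
    ∑ n ∈ s, ρ ^ n ≤ (1 - ρ)⁻¹ := by
  calc ∑ n ∈ s, ρ ^ n ≤ ∑' n, ρ ^ n :=
        Summable.sum_le_tsum s (fun i _ => pow_nonneg h0 i) (summable_geometric_of_lt_one h0 h1)
    _ = (1 - ρ)⁻¹ := tsum_geometric_of_lt_one h0 h1

lemma sum_rpow_le {Q : ℝ} (hQ : 1 < Q) {α E : ℝ} (hα : 0 < α) (s : Finset ℕ)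
    (f : ℕ → ℝ) (d : ℕ → ℕ) (hd : Set.InjOn d s)
    (he : ∀ n ∈ s, f n ≤ Q ^ (E - α * d n)) :
    ∑ n ∈ s, f n ≤ Q ^ E * (1 - Q ^ (-α))⁻¹ := by
  have hQ0 : (0:ℝ) < Q := lt_trans one_pos hQ
  have hρ0 : (0:ℝ) ≤ Q ^ (-α) := (Real.rpow_pos_of_pos hQ0 _).le
  have hρ1 : Q ^ (-α) < 1 := Real.rpow_lt_one_of_one_lt_of_neg hQ (neg_neg_of_pos hα)
  calc ∑ n ∈ s, f n ≤ ∑ n ∈ s, Q ^ E * (Q ^ (-α)) ^ (d n) := by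
        apply Finset.sum_le_sum
        intro n hn
        have : Q ^ (E - α * d n) = Q ^ E * (Q ^ (-α)) ^ (d n) := by
          rw [← Real.rpow_natCast (Q ^ (-α)) (d n), ← Real.rpow_mul hQ0.le,
            ← Real.rpow_add hQ0]
          ring_nf
        rw [← this]; exact he n hn
    _ = Q ^ E * ∑ n ∈ s, (Q ^ (-α)) ^ (d n) := by rw [Finset.mul_sum]
    _ ≤ Q ^ E * (1 - Q ^ (-α))⁻¹ := by
        apply mul_le_mul_of_nonneg_left _ (Real.rpow_pos_of_pos hQ0 _).le
        rw [← Finset.sum_image (g := d) (f := fun k => (Q ^ (-α)) ^ k)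
          (fun x hx y hy h => hd hx hy h)]
        exact sum_pow_le hρ0 hρ1 _

set_option maxHeartbeats 2000000 in
/-- Lemma (basic 3): for `0 < φ, κ < 1` with `φ + κ > 1`, there is a constant
`C = C(φ, κ, q)` such that for every `r ∈ F_q[t]` and every `M ≥ 0`,
`∑_{deg x > M} q^{-φ deg x} q^{-κ max{deg(r+x), M}} ≤ C q^{(1-φ-κ) max{deg r, M}}`. -/
theorem stmt_11 (F : Type*) [Field F] [Fintype F] (φ κ : ℝ)
    (hφ : 0 < φ) (hφ1 : φ < 1) (hκ : 0 < κ) (hκ1 : κ < 1) (hφκ : 1 < φ + κ) :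
    ∃ C : ℝ, 0 < C ∧ ∀ (r : Polynomial F) (M : ℕ),
      ∑' x : {x : Polynomial F // x ≠ 0 ∧ M < x.natDegree},
          (Fintype.card F : ℝ) ^ (-φ * ((x : Polynomial F).natDegree : ℝ)) *
            (Fintype.card F : ℝ) ^ (-κ * ((dmax (r + (x : Polynomial F)) M : ℕ) : ℝ))
        ≤ C * (Fintype.card F : ℝ) ^ ((1 - φ - κ) * ((dmax r M : ℕ) : ℝ)) := by
  set q : ℕ := Fintype.card F with hqdef
  have hq2 : 1 < q := Fintype.one_lt_card
  set Q : ℝ := (q : ℝ) with hQdef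
  have hQ : 1 < Q := by rw [hQdef]; exact_mod_cast hq2
  have hQ0 : (0:ℝ) < Q := lt_trans one_pos hQ
  have hc : ∀ α : ℝ, 0 < α → (0:ℝ) < (1 - Q ^ (-α))⁻¹ := fun α hα => by
    have : Q ^ (-α) < 1 := Real.rpow_lt_one_of_one_lt_of_neg hQ (neg_neg_of_pos hα)
    exact inv_pos.mpr (by linarith)
  set c1 : ℝ := (1 - Q ^ (-(1 - φ)))⁻¹ with hc1def
  set c2 : ℝ := (1 - Q ^ (-(φ + κ - 1)))⁻¹ with hc2def
  set c3 : ℝ := (1 - Q ^ (-(1 - κ)))⁻¹ with hc3def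
  have hc1 : 0 < c1 := hc _ (by linarith)
  have hc2 : 0 < c2 := hc _ (by linarith)
  have hc3 : 0 < c3 := hc _ (by linarith)
  refine ⟨Q * (c1 + c3 + 2 * c2), by positivity, ?_⟩
  intro r M
  set N : ℕ := dmax r M with hNdef
  have hMN : M ≤ N := dmax_ge r M
  set RHS : ℝ := Q * (c1 + c3 + 2 * c2) * Q ^ ((1 - φ - κ) * (N : ℝ)) with hRHS
  have hRHS0 : 0 ≤ RHS := by positivity
  apply tsum_le_of_sum_le' hRHS0
  intro s
  -- push to polynomials
  set f : Polynomial F → ℝ :=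
    fun y => Q ^ (-φ * (y.natDegree : ℝ)) * Q ^ (-κ * ((dmax (r + y) M : ℕ) : ℝ)) with hfdef
  have hf0 : ∀ y, 0 ≤ f y := fun y => by positivity
  set t : Finset (Polynomial F) := s.image Subtype.val with htdef
  have hsum : ∑ x ∈ s, f x.val = ∑ y ∈ t, f y :=
    (Finset.sum_image (fun x _ y _ h => Subtype.ext h)).symm
  have ht : ∀ y ∈ t, y ≠ 0 ∧ M < y.natDegree := by
    intro y hy
    rcases Finset.mem_image.mp hy with ⟨x, _, rfl⟩
    exact x.property
  show ∑ x ∈ s, f x.val ≤ RHS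
  rw [hsum]
  -- split according to deg y ≤ dmax (r+y) M or not
  rw [← Finset.sum_filter_add_sum_filter_not t (fun y => y.natDegree ≤ dmax (r + y) M) f]
  set tA := t.filter (fun y => y.natDegree ≤ dmax (r + y) M) with htA
  set tB := t.filter (fun y => ¬ y.natDegree ≤ dmax (r + y) M) with htB
  set E : ℝ := 1 + (1 - φ - κ) * (N : ℝ) with hEdef
  have hQE : Q ^ E = Q * Q ^ ((1 - φ - κ) * (N : ℝ)) := by
    rw [hEdef, Real.rpow_add hQ0, Real.rpow_one]
  -- bound for A part
  have hA : ∑ y ∈ tA, f y ≤ Q ^ E * c1 + Q ^ E * c2 := by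
    have step1 : ∑ y ∈ tA, f y ≤
        ∑ y ∈ tA, (Q ^ (-φ * (y.natDegree : ℝ)) *
          Q ^ (-κ * ((max y.natDegree N : ℕ) : ℝ))) := by
      apply Finset.sum_le_sum
      intro y hy
      rcases Finset.mem_filter.mp hy with ⟨hyt, hle⟩
      have hN : N ≤ dmax (r + y) M := by
        have h := dmax_r_le r y M
        rwa [max_eq_right hle] at h
      have hmax : ((max y.natDegree N : ℕ) : ℝ) ≤ ((dmax (r + y) M : ℕ) : ℝ) := by
        exact_mod_cast max_le hle hN
      have h2 : Q ^ (-κ * ((dmax (r + y) M : ℕ) : ℝ)) ≤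
          Q ^ (-κ * ((max y.natDegree N : ℕ) : ℝ)) :=
        Real.rpow_le_rpow_of_exponent_le hQ.le (by nlinarith)
      exact mul_le_mul_of_nonneg_left h2 (by positivity)
    have step2 : ∑ y ∈ tA, (Q ^ (-φ * (y.natDegree : ℝ)) *
          Q ^ (-κ * ((max y.natDegree N : ℕ) : ℝ))) ≤
        ∑ n ∈ tA.image Polynomial.natDegree,
          ((q : ℝ) ^ (n + 1) * (Q ^ (-φ * (n : ℝ)) * Q ^ (-κ * ((max n N : ℕ) : ℝ)))) := by
      have hfib := Finset.sum_fiberwise_of_maps_to (s := tA)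
        (t := tA.image Polynomial.natDegree) (g := Polynomial.natDegree)
        (fun y hy => Finset.mem_image_of_mem _ hy)
        (fun y => Q ^ (-φ * (y.natDegree : ℝ)) * Q ^ (-κ * ((max y.natDegree N : ℕ) : ℝ)))
      rw [← hfib]
      apply Finset.sum_le_sum
      intro n hn
      have hcard : (tA.filter (fun y => y.natDegree = n)).card ≤ q ^ (n + 1) := by
        apply card_fiber_le n _ id (Set.injOn_id _)
        intro y hy
        exact le_of_eq (Finset.mem_filter.mp hy).2
      calc ∑ y ∈ tA.filter (fun y => y.natDegree = n),
            (Q ^ (-φ * (y.natDegree : ℝ)) * Q ^ (-κ * ((max y.natDegree N : ℕ) : ℝ)))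
          ≤ (tA.filter (fun y => y.natDegree = n)).card •
            (Q ^ (-φ * (n : ℝ)) * Q ^ (-κ * ((max n N : ℕ) : ℝ))) := by
            apply Finset.sum_le_card_nsmul
            intro y hy
            rw [(Finset.mem_filter.mp hy).2]
        _ = ((tA.filter (fun y => y.natDegree = n)).card : ℝ) *
            (Q ^ (-φ * (n : ℝ)) * Q ^ (-κ * ((max n N : ℕ) : ℝ))) := nsmul_eq_mul _ _
        _ ≤ (q : ℝ) ^ (n + 1) * (Q ^ (-φ * (n : ℝ)) * Q ^ (-κ * ((max n N : ℕ) : ℝ))) := by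
            apply mul_le_mul_of_nonneg_right _ (by positivity)
            exact_mod_cast hcard
    have hu_gt : ∀ n ∈ tA.image Polynomial.natDegree, M < n := by
      intro n hn
      rcases Finset.mem_image.mp hn with ⟨y, hy, rfl⟩
      exact (ht y (Finset.mem_filter.mp hy).1).2
    have step3 : ∑ n ∈ tA.image Polynomial.natDegree,
          ((q : ℝ) ^ (n + 1) * (Q ^ (-φ * (n : ℝ)) * Q ^ (-κ * ((max n N : ℕ) : ℝ))))
        ≤ Q ^ E * c1 + Q ^ E * c2 := by
      rw [← Finset.sum_filter_add_sum_filter_not (tA.image Polynomial.natDegree)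
        (fun n => n ≤ N)]
      apply add_le_add
      · apply sum_rpow_le hQ (by linarith : (0:ℝ) < 1 - φ) _ _ (fun n => N - n)
        · intro a ha b hb hab
          have haN := (Finset.mem_filter.mp ha).2
          have hbN := (Finset.mem_filter.mp hb).2
          simp only at hab
          omega
        · intro n hn
          have hnN : n ≤ N := (Finset.mem_filter.mp hn).2
          have heq : ((q : ℝ) ^ (n + 1) * (Q ^ (-φ * (n : ℝ)) * Q ^ (-κ * ((max n N : ℕ) : ℝ))))
              = Q ^ ((((n + 1 : ℕ)) : ℝ) + (-φ * n + -κ * N)) := by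
            rw [max_eq_right hnN, Real.rpow_add hQ0, ← Real.rpow_natCast Q (n + 1)]
            rw [Real.rpow_add hQ0 (-φ * (n:ℝ)) (-κ * (N:ℝ))]
          rw [heq]
          apply Real.rpow_le_rpow_of_exponent_le hQ.le
          rw [hEdef, Nat.cast_sub hnN]
          push_cast
          ring_nf
          linarith
      · apply sum_rpow_le hQ (by linarith : (0:ℝ) < φ + κ - 1) _ _ (fun n => n - N)
        · intro a ha b hb hab
          have haN := (Finset.mem_filter.mp ha).2
          have hbN := (Finset.mem_filter.mp hb).2
          simp only [not_le] at haN hbN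
          simp only at hab
          omega
        · intro n hn
          have hnN : N ≤ n := le_of_lt (not_le.mp (Finset.mem_filter.mp hn).2)
          have heq : ((q : ℝ) ^ (n + 1) * (Q ^ (-φ * (n : ℝ)) * Q ^ (-κ * ((max n N : ℕ) : ℝ))))
              = Q ^ ((((n + 1 : ℕ)) : ℝ) + (-φ * n + -κ * n)) := by
            rw [max_eq_left hnN, Real.rpow_add hQ0, ← Real.rpow_natCast Q (n + 1)]
            rw [Real.rpow_add hQ0 (-φ * (n:ℝ)) (-κ * (n:ℝ))]
          rw [heq]
          apply Real.rpow_le_rpow_of_exponent_le hQ.le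
          rw [hEdef, Nat.cast_sub hnN]
          push_cast
          ring_nf
          linarith
    linarith [step1, step2, step3]
  have hB : ∑ y ∈ tB, f y ≤ Q ^ E * c3 + Q ^ E * c2 := by
    have step2 : ∑ y ∈ tB, f y ≤
        ∑ m ∈ tB.image (fun y => dmax (r + y) M),
          ((q : ℝ) ^ (m + 1) * (Q ^ (-φ * ((max N (m + 1) : ℕ) : ℝ)) * Q ^ (-κ * (m : ℝ)))) := by
      have hfib := Finset.sum_fiberwise_of_maps_to (s := tB)
        (t := tB.image (fun y => dmax (r + y) M)) (g := fun y => dmax (r + y) M)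
        (fun y hy => Finset.mem_image_of_mem _ hy) f
      rw [← hfib]
      apply Finset.sum_le_sum
      intro m hm
      have hcard : (tB.filter (fun y => dmax (r + y) M = m)).card ≤ q ^ (m + 1) := by
        apply card_fiber_le m _ (fun y => r + y)
        · intro a _ b _ hab
          simpa using hab
        · intro y hy
          have h := natDegree_le_dmax (r + y) M
          rw [(Finset.mem_filter.mp hy).2] at h
          exact h
      calc ∑ y ∈ tB.filter (fun y => dmax (r + y) M = m), f y
          ≤ (tB.filter (fun y => dmax (r + y) M = m)).card •
            (Q ^ (-φ * ((max N (m + 1) : ℕ) : ℝ)) * Q ^ (-κ * (m : ℝ))) := by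
            apply Finset.sum_le_card_nsmul
            intro y hy
            rcases Finset.mem_filter.mp hy with ⟨hytB, hym⟩
            rcases Finset.mem_filter.mp hytB with ⟨hyt, hnle⟩
            have hmn : dmax (r + y) M < y.natDegree := not_le.mp hnle
            rw [hym] at hmn
            have hNn : N ≤ y.natDegree := by
              have h := dmax_r_le r y M
              rw [hym] at h
              rwa [max_eq_left (le_of_lt hmn)] at h
            have hge : ((max N (m + 1) : ℕ) : ℝ) ≤ (y.natDegree : ℝ) := by
              exact_mod_cast max_le hNn (by omega)
            have h1 : Q ^ (-φ * (y.natDegree : ℝ)) ≤ Q ^ (-φ * ((max N (m + 1) : ℕ) : ℝ)) :=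
              Real.rpow_le_rpow_of_exponent_le hQ.le (by nlinarith)
            have h2 : f y = Q ^ (-φ * (y.natDegree : ℝ)) * Q ^ (-κ * (m : ℝ)) := by
              rw [hfdef]; simp only; rw [hym]
            rw [h2]
            exact mul_le_mul_of_nonneg_right h1 (by positivity)
        _ = ((tB.filter (fun y => dmax (r + y) M = m)).card : ℝ) *
            (Q ^ (-φ * ((max N (m + 1) : ℕ) : ℝ)) * Q ^ (-κ * (m : ℝ))) := nsmul_eq_mul _ _
        _ ≤ (q : ℝ) ^ (m + 1) *
            (Q ^ (-φ * ((max N (m + 1) : ℕ) : ℝ)) * Q ^ (-κ * (m : ℝ))) := by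
            apply mul_le_mul_of_nonneg_right _ (by positivity)
            exact_mod_cast hcard
    have step3 : ∑ m ∈ tB.image (fun y => dmax (r + y) M),
          ((q : ℝ) ^ (m + 1) * (Q ^ (-φ * ((max N (m + 1) : ℕ) : ℝ)) * Q ^ (-κ * (m : ℝ))))
        ≤ Q ^ E * c3 + Q ^ E * c2 := by
      rw [← Finset.sum_filter_add_sum_filter_not (tB.image (fun y => dmax (r + y) M))
        (fun m => m < N)]
      apply add_le_add
      · apply sum_rpow_le hQ (by linarith : (0:ℝ) < 1 - κ) _ _ (fun m => N - m)
        · intro a ha b hb hab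
          have haN := (Finset.mem_filter.mp ha).2
          have hbN := (Finset.mem_filter.mp hb).2
          simp only at hab
          omega
        · intro m hm
          have hmN : m < N := (Finset.mem_filter.mp hm).2
          have heq : ((q : ℝ) ^ (m + 1) * (Q ^ (-φ * ((max N (m + 1) : ℕ) : ℝ)) *
                Q ^ (-κ * (m : ℝ))))
              = Q ^ ((((m + 1 : ℕ)) : ℝ) + (-φ * N + -κ * m)) := by
            rw [max_eq_left (by omega : m + 1 ≤ N), Real.rpow_add hQ0,
              ← Real.rpow_natCast Q (m + 1)]
            rw [Real.rpow_add hQ0 (-φ * (N:ℝ)) (-κ * (m:ℝ))]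
          rw [heq]
          apply Real.rpow_le_rpow_of_exponent_le hQ.le
          rw [hEdef, Nat.cast_sub (le_of_lt hmN)]
          push_cast
          ring_nf
          linarith
      · apply sum_rpow_le hQ (by linarith : (0:ℝ) < φ + κ - 1) _ _ (fun m => m - N)
        · intro a ha b hb hab
          have haN := (Finset.mem_filter.mp ha).2
          have hbN := (Finset.mem_filter.mp hb).2
          simp only [not_lt] at haN hbN
          simp only at hab
          omega
        · intro m hm
          have hmN : N ≤ m := not_lt.mp (Finset.mem_filter.mp hm).2
          have heq : ((q : ℝ) ^ (m + 1) * (Q ^ (-φ * ((max N (m + 1) : ℕ) : ℝ)) *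
                Q ^ (-κ * (m : ℝ))))
              = Q ^ ((((m + 1 : ℕ)) : ℝ) + (-φ * ((m : ℝ) + 1) + -κ * m)) := by
            rw [max_eq_right (by omega : N ≤ m + 1), Real.rpow_add hQ0,
              ← Real.rpow_natCast Q (m + 1)]
            rw [Real.rpow_add hQ0 (-φ * ((m:ℝ) + 1)) (-κ * (m:ℝ))]
            push_cast
            ring_nf
          rw [heq]
          apply Real.rpow_le_rpow_of_exponent_le hQ.le
          rw [hEdef, Nat.cast_sub hmN]
          push_cast
          nlinarith [hmN, hφ]
    linarith [step2, step3]
  calc ∑ y ∈ tA, f y + ∑ y ∈ tB, f y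
      ≤ (Q ^ E * c1 + Q ^ E * c2) + (Q ^ E * c3 + Q ^ E * c2) := add_le_add hA hB
    _ = RHS := by rw [hRHS, hQE]; ring
end

section
/- Let q be a prime power and 1/2 < γ < 2/3. There is a constant C depending only on γ and q such that for all nonzero polynomials a, b ∈ F_q[t], ∑_{x ∈ F_q[t], x ≠ 0} q^{-γ deg x} · q^{-γ deg(x+a)} · q^{(1-2γ) deg(x+b)} ≤ C · q^{(1-2γ)(deg a + deg b)}. -/
open scoped ENNReal
open Polynomial

namespace Stmt12Aux

lemma two_sided_geom (r : ℝ≥0∞) (N : ℕ) :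
    ∑' m : ℕ, r ^ (Nat.dist m N) ≤ 2 * (1 - r)⁻¹ := by
  classical
  have hinj : Function.Injective (fun m : ℕ => ((Nat.dist m N, decide (m ≤ N)) : ℕ × Bool)) := by
    intro m1 m2 h
    simp only [Prod.mk.injEq] at h
    have h2 : (m1 ≤ N) ↔ (m2 ≤ N) := by
      have := h.2
      simpa [decide_eq_decide] using this
    have h1 := h.1
    simp only [Nat.dist] at h1
    omega
  calc ∑' m : ℕ, r ^ (Nat.dist m N)
      ≤ ∑' p : ℕ × Bool, r ^ p.1 :=
        ENNReal.tsum_comp_le_tsum_of_injective hinj (fun p => r ^ p.1)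
    _ = ∑' i : ℕ, ∑' _ : Bool, r ^ i := ENNReal.tsum_prod (f := fun i _ => r ^ i)
    _ = ∑' i : ℕ, 2 * r ^ i := by
        apply tsum_congr; intro i
        rw [tsum_fintype]
        simp [two_mul]
    _ = 2 * ∑' i : ℕ, r ^ i := ENNReal.tsum_mul_left
    _ = 2 * (1 - r)⁻¹ := by rw [ENNReal.tsum_geometric]

lemma abs_sum_le (Q : ℝ≥0∞) (hQ : 1 < Q) (hQt : Q ≠ ⊤) (ε : ℝ) (hε : 0 < ε) (N : ℕ) :
    ∑' m : ℕ, Q ^ (-(ε * |(m : ℝ) - (N : ℝ)|)) ≤ 2 * (1 - Q ^ (-ε))⁻¹ := by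
  have key : ∀ m : ℕ, Q ^ (-(ε * |(m : ℝ) - (N : ℝ)|)) = (Q ^ (-ε)) ^ (Nat.dist m N) := by
    intro m
    have h1 : |(m : ℝ) - (N : ℝ)| = ((Nat.dist m N : ℕ) : ℝ) := by
      rcases le_total m N with h | h
      · rw [Nat.dist_eq_sub_of_le h, abs_of_nonpos (by
          simp only [sub_nonpos]; exact_mod_cast h), Nat.cast_sub h]; ring
      · rw [Nat.dist_eq_sub_of_le_right h, abs_of_nonneg (by
          simp only [sub_nonneg]; exact_mod_cast h), Nat.cast_sub h]
    rw [h1, ← ENNReal.rpow_natCast (Q ^ (-ε)), ← ENNReal.rpow_mul]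
    ring_nf
  simp only [key]
  exact two_sided_geom _ N

lemma geom_min (Q : ℝ≥0∞) (hQ : 1 < Q) (hQt : Q ≠ ⊤) (ε μ : ℝ) (hε : 0 < ε)
    (h1 : ε ≤ 1 + μ) (h2 : ε ≤ -μ) (n : ℕ) :
    ∑' m : ℕ, Q ^ (((min n m : ℕ) : ℝ)) * Q ^ (μ * m) ≤
      (2 * (1 - Q ^ (-ε))⁻¹) * Q ^ ((1 + μ) * n) := by
  have hQ0 : Q ≠ 0 := (zero_lt_one.trans hQ).ne'
  have step : ∀ m : ℕ, Q ^ (((min n m : ℕ) : ℝ)) * Q ^ (μ * m)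
      ≤ Q ^ ((1 + μ) * n) * Q ^ (-(ε * |(m : ℝ) - (n : ℝ)|)) := by
    intro m
    rw [← ENNReal.rpow_add _ _ hQ0 hQt, ← ENNReal.rpow_add _ _ hQ0 hQt]
    apply ENNReal.rpow_le_rpow_of_exponent_le hQ.le
    rcases le_total m n with h | h
    · have hc : (m : ℝ) ≤ n := Nat.cast_le.mpr h
      rw [min_eq_right h, abs_of_nonpos (by linarith)]
      nlinarith [mul_nonneg (by linarith : (0:ℝ) ≤ 1 + μ - ε) (by linarith : (0:ℝ) ≤ (n:ℝ) - m)]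
    · have hc : (n : ℝ) ≤ m := Nat.cast_le.mpr h
      rw [min_eq_left h, abs_of_nonneg (by linarith)]
      nlinarith [mul_nonneg (by linarith : (0:ℝ) ≤ -μ - ε) (by linarith : (0:ℝ) ≤ (m:ℝ) - n)]
  calc ∑' m : ℕ, Q ^ (((min n m : ℕ) : ℝ)) * Q ^ (μ * m)
      ≤ ∑' m : ℕ, Q ^ ((1 + μ) * n) * Q ^ (-(ε * |(m : ℝ) - (n : ℝ)|)) :=
        ENNReal.tsum_le_tsum step
    _ = Q ^ ((1 + μ) * n) * ∑' m : ℕ, Q ^ (-(ε * |(m : ℝ) - (n : ℝ)|)) := ENNReal.tsum_mul_left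
    _ ≤ Q ^ ((1 + μ) * n) * (2 * (1 - Q ^ (-ε))⁻¹) := by
        gcongr
        exact abs_sum_le Q hQ hQt ε hε n
    _ = (2 * (1 - Q ^ (-ε))⁻¹) * Q ^ ((1 + μ) * n) := mul_comm _ _

lemma outer_exp (γ ε x α β : ℝ) (hγ1 : 1/2 < γ) (hγ2 : γ < 2/3)
    (hε1 : ε ≤ 2 - 3*γ) (hε2 : ε ≤ 2*γ - 1) :
    (-γ * x) + (x + -γ * (max x α) + (1 - 2*γ) * (max x β))
      ≤ (1 - 2*γ) * (α + β) + -(ε * |x - α|) ∨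
    (-γ * x) + (x + -γ * (max x α) + (1 - 2*γ) * (max x β))
      ≤ (1 - 2*γ) * (α + β) + -(ε * |x - β|) := by
  rcases le_total x α with h1 | h1 <;> rcases le_total x β with h2 | h2
  · left
    rw [max_eq_right h1, max_eq_right h2, abs_of_nonpos (by linarith)]
    nlinarith [mul_nonneg (by linarith : (0:ℝ) ≤ 1 - γ - ε) (by linarith : (0:ℝ) ≤ α - x)]
  · left
    rw [max_eq_right h1, max_eq_left h2, abs_of_nonpos (by linarith)]
    nlinarith [mul_nonneg (by linarith : (0:ℝ) ≤ 1 - γ - ε) (by linarith : (0:ℝ) ≤ α - x),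
      mul_nonneg (by linarith : (0:ℝ) ≤ 2*γ - 1) (by linarith : (0:ℝ) ≤ x - β)]
  · left
    rw [max_eq_left h1, max_eq_right h2, abs_of_nonneg (by linarith)]
    nlinarith [mul_nonneg (by linarith : (0:ℝ) ≤ 2*γ - 1 - ε) (by linarith : (0:ℝ) ≤ x - α)]
  · rcases le_total α β with h3 | h3
    · right
      rw [max_eq_left h1, max_eq_left h2, abs_of_nonneg (by linarith)]
      nlinarith [mul_nonneg (by linarith : (0:ℝ) ≤ 4*γ - 2 - ε) (by linarith : (0:ℝ) ≤ x - β),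
        mul_nonneg (by linarith : (0:ℝ) ≤ 2*γ - 1) (by linarith : (0:ℝ) ≤ β - α)]
    · left
      rw [max_eq_left h1, max_eq_left h2, abs_of_nonneg (by linarith)]
      nlinarith [mul_nonneg (by linarith : (0:ℝ) ≤ 4*γ - 2 - ε) (by linarith : (0:ℝ) ≤ x - α),
        mul_nonneg (by linarith : (0:ℝ) ≤ 2*γ - 1) (by linarith : (0:ℝ) ≤ α - β)]

variable {F : Type*} [Field F] [Fintype F]

lemma ball_iff (N : ℕ) (p : Polynomial F) :
    p.natDegree ≤ N ↔ p ∈ degreeLT F (N + 1) := by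
  rw [Polynomial.mem_degreeLT]
  by_cases hp : p = 0
  · subst hp
    simp [Polynomial.degree_zero]
  · rw [← Polynomial.natDegree_lt_iff_degree_lt hp]
    exact Nat.lt_succ_iff.symm

lemma tsum_le_card {α : Type*} (f : α → ℝ≥0∞) (c : ℝ≥0∞) (N : ℕ)
    (e : α → Polynomial F) (he : Function.Injective e) (hd : ∀ x, (e x).natDegree ≤ N)
    (hf : ∀ x, f x ≤ c) :
    ∑' x, f x ≤ (Fintype.card F : ℝ≥0∞) ^ (N + 1) * c := by
  classical
  have e1 : {y : Polynomial F // y.natDegree ≤ N} ≃ degreeLT F (N + 1) :=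
    Equiv.subtypeEquivRight fun p => ball_iff N p
  have e2 := (Polynomial.degreeLTEquiv F (N + 1)).toEquiv
  haveI : Fintype {y : Polynomial F // y.natDegree ≤ N} :=
    Fintype.ofEquiv _ (e1.trans e2).symm
  have hcard : Fintype.card {y : Polynomial F // y.natDegree ≤ N} = Fintype.card F ^ (N + 1) := by
    rw [Fintype.card_congr (e1.trans e2), Fintype.card_fun]
    simp
  have hinj : Function.Injective
      (fun x : α => (⟨e x, hd x⟩ : {y : Polynomial F // y.natDegree ≤ N})) := by
    intro x y hxy
    exact he (congrArg Subtype.val hxy)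
  calc ∑' x, f x ≤ ∑' _ : α, c := ENNReal.tsum_le_tsum hf
    _ ≤ ∑' _ : {y : Polynomial F // y.natDegree ≤ N}, c :=
        ENNReal.tsum_comp_le_tsum_of_injective hinj (fun _ => c)
    _ = (Fintype.card F : ℝ≥0∞) ^ (N + 1) * c := by
        rw [tsum_fintype]
        simp only [Finset.sum_const, Finset.card_univ, hcard, nsmul_eq_mul]
        push_cast
        ring

lemma natDegree_add_max (x c : Polynomial F) (h : x.natDegree ≠ c.natDegree) :
    (x + c).natDegree = max x.natDegree c.natDegree := by
  rcases lt_or_gt_of_ne h with h' | h'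
  · rw [Polynomial.natDegree_add_eq_right_of_natDegree_lt h', max_eq_right h'.le]
  · rw [Polynomial.natDegree_add_eq_left_of_natDegree_lt h', max_eq_left h'.le]

lemma geo1 (ε μ : ℝ) (hε : 0 < ε) (h1 : ε ≤ 1 + μ) (h2 : ε ≤ -μ) (n : ℕ) (c : Polynomial F) :
    ∑' x : {x : Polynomial F // x.natDegree = n},
        (Fintype.card F : ℝ≥0∞) ^ (μ * (((x : Polynomial F) + c).natDegree : ℝ))
      ≤ (Fintype.card F : ℝ≥0∞) * (2 * (1 - (Fintype.card F : ℝ≥0∞) ^ (-ε))⁻¹) *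
        (Fintype.card F : ℝ≥0∞) ^ ((1 + μ) * n) := by
  classical
  set Q : ℝ≥0∞ := (Fintype.card F : ℝ≥0∞) with hQdef
  have hq1 : 1 < Fintype.card F := Fintype.one_lt_card
  have hQ : 1 < Q := by rw [hQdef]; exact_mod_cast hq1
  have hQt : Q ≠ ⊤ := ENNReal.natCast_ne_top _
  have hQ0 : Q ≠ 0 := (zero_lt_one.trans hQ).ne'
  have e1 := (Equiv.sigmaFiberEquiv
      (fun x : {x : Polynomial F // x.natDegree = n} => ((x : Polynomial F) + c).natDegree)).tsum_eq
      (fun x : {x : Polynomial F // x.natDegree = n} =>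
        Q ^ (μ * (((x : Polynomial F) + c).natDegree : ℝ)))
  rw [← e1, ENNReal.tsum_sigma']
  have inner_le : ∀ m : ℕ,
      (∑' y : {y : {x : Polynomial F // x.natDegree = n} //
          ((y : Polynomial F) + c).natDegree = m},
        Q ^ (μ * (((y.1 : Polynomial F) + c).natDegree : ℝ)))
      ≤ Q ^ (min n m + 1) * Q ^ (μ * m) := by
    intro m
    have hval : ∀ y : {y : {x : Polynomial F // x.natDegree = n} //
        ((y : Polynomial F) + c).natDegree = m},
        Q ^ (μ * (((y.1 : Polynomial F) + c).natDegree : ℝ)) ≤ Q ^ (μ * (m : ℝ)) := by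
      intro y
      rw [y.2]
    rcases le_total m n with h | h
    · apply tsum_le_card _ _ (min n m) (fun y => y.1.1 + c)
      · intro y z hyz
        apply Subtype.ext; apply Subtype.ext
        exact add_right_cancel hyz
      · intro y
        rw [y.2, min_eq_right h]
      · exact hval
    · apply tsum_le_card _ _ (min n m) (fun y => y.1.1)
      · intro y z hyz
        apply Subtype.ext; apply Subtype.ext
        exact hyz
      · intro y
        rw [y.1.2, min_eq_left h]
      · exact hval
  calc ∑' (m : ℕ) (y : {y : {x : Polynomial F // x.natDegree = n} //
          ((y : Polynomial F) + c).natDegree = m}),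
        Q ^ (μ * (((y.1 : Polynomial F) + c).natDegree : ℝ))
      ≤ ∑' m : ℕ, Q ^ (min n m + 1) * Q ^ (μ * m) := ENNReal.tsum_le_tsum inner_le
    _ = Q * ∑' m : ℕ, Q ^ (((min n m : ℕ) : ℝ)) * Q ^ (μ * m) := by
        rw [← ENNReal.tsum_mul_left]
        apply tsum_congr; intro m
        rw [pow_succ, ENNReal.rpow_natCast]
        ring
    _ ≤ Q * ((2 * (1 - Q ^ (-ε))⁻¹) * Q ^ ((1 + μ) * n)) := by
        gcongr
        exact geom_min Q hQ hQt ε μ hε h1 h2 n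
    _ = Q * (2 * (1 - Q ^ (-ε))⁻¹) * Q ^ ((1 + μ) * n) := by ring

lemma inner_bound (γ ε : ℝ) (hγ1 : 1/2 < γ) (hγ2 : γ < 2/3)
    (hε : 0 < ε) (hε1 : ε ≤ 2 - 3*γ) (hε2 : ε ≤ 2*γ - 1)
    (a b : Polynomial F) (n : ℕ) :
    ∑' x : {x : Polynomial F // x.natDegree = n},
        (Fintype.card F : ℝ≥0∞) ^ (-γ * (((x : Polynomial F) + a).natDegree : ℝ)) *
        (Fintype.card F : ℝ≥0∞) ^ ((1 - 2*γ) * (((x : Polynomial F) + b).natDegree : ℝ))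
      ≤ 2 * ((Fintype.card F : ℝ≥0∞) * (2 * (1 - (Fintype.card F : ℝ≥0∞) ^ (-ε))⁻¹)) *
        (Fintype.card F : ℝ≥0∞) ^
          ((n : ℝ) + -γ * ((max n a.natDegree : ℕ) : ℝ)
            + (1 - 2*γ) * ((max n b.natDegree : ℕ) : ℝ)) := by
  classical
  set A := a.natDegree with hA
  set B := b.natDegree with hB
  set Q : ℝ≥0∞ := (Fintype.card F : ℝ≥0∞) with hQdef
  have hq1 : 1 < Fintype.card F := Fintype.one_lt_card
  have hQ : 1 < Q := by rw [hQdef]; exact_mod_cast hq1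
  have hQt : Q ≠ ⊤ := ENNReal.natCast_ne_top _
  have hQ0 : Q ≠ 0 := (zero_lt_one.trans hQ).ne'
  have hadd : ∀ s t : ℝ, Q ^ (s + t) = Q ^ s * Q ^ t :=
    fun s t => ENNReal.rpow_add s t hQ0 hQt
  set KK : ℝ≥0∞ := 2 * (1 - Q ^ (-ε))⁻¹ with hKK
  have hKK1 : 1 ≤ KK := by
    rw [hKK]
    calc (1 : ℝ≥0∞) = 2 * 2⁻¹ := by
          rw [ENNReal.mul_inv_cancel (by norm_num) (by norm_num)]
      _ ≤ 2 * (1 - Q ^ (-ε))⁻¹ := by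
          gcongr
          exact tsub_le_self.trans one_le_two
  set K : ℝ≥0∞ := Q * KK with hK
  by_cases hnA : n = A
  · by_cases hnB : n = B
    · have hpt : ∀ x : {x : Polynomial F // x.natDegree = n},
          Q ^ (-γ * (((x : Polynomial F) + a).natDegree : ℝ)) *
          Q ^ ((1 - 2*γ) * (((x : Polynomial F) + b).natDegree : ℝ))
          ≤ Q ^ ((1 - 3*γ) * (((x : Polynomial F) + a).natDegree : ℝ))
            + Q ^ ((1 - 3*γ) * (((x : Polynomial F) + b).natDegree : ℝ)) := by
        intro x
        set d2 := (((x : Polynomial F) + a).natDegree : ℝ) with hd2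
        set d3 := (((x : Polynomial F) + b).natDegree : ℝ) with hd3
        have hd2n : (0:ℝ) ≤ d2 := Nat.cast_nonneg _
        have hd3n : (0:ℝ) ≤ d3 := Nat.cast_nonneg _
        rw [← hadd]
        rcases le_total d2 d3 with h | h
        · have : -γ * d2 + (1 - 2*γ) * d3 ≤ (1 - 3*γ) * d2 := by nlinarith
          exact le_trans (ENNReal.rpow_le_rpow_of_exponent_le hQ.le this) le_self_add
        · have : -γ * d2 + (1 - 2*γ) * d3 ≤ (1 - 3*γ) * d3 := by nlinarith
          exact le_trans (ENNReal.rpow_le_rpow_of_exponent_le hQ.le this) le_add_self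
      calc ∑' x : {x : Polynomial F // x.natDegree = n},
            Q ^ (-γ * (((x : Polynomial F) + a).natDegree : ℝ)) *
            Q ^ ((1 - 2*γ) * (((x : Polynomial F) + b).natDegree : ℝ))
          ≤ ∑' x : {x : Polynomial F // x.natDegree = n},
            (Q ^ ((1 - 3*γ) * (((x : Polynomial F) + a).natDegree : ℝ))
              + Q ^ ((1 - 3*γ) * (((x : Polynomial F) + b).natDegree : ℝ))) :=
            ENNReal.tsum_le_tsum hpt
        _ = (∑' x : {x : Polynomial F // x.natDegree = n},
              Q ^ ((1 - 3*γ) * (((x : Polynomial F) + a).natDegree : ℝ)))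
            + ∑' x : {x : Polynomial F // x.natDegree = n},
              Q ^ ((1 - 3*γ) * (((x : Polynomial F) + b).natDegree : ℝ)) :=
            ENNReal.tsum_add
        _ ≤ K * Q ^ ((1 + (1 - 3*γ)) * n) + K * Q ^ ((1 + (1 - 3*γ)) * n) := by
            apply add_le_add
            · exact geo1 ε (1 - 3*γ) hε (by linarith) (by linarith) n a
            · exact geo1 ε (1 - 3*γ) hε (by linarith) (by linarith) n b
        _ = 2 * K * Q ^ ((1 + (1 - 3*γ)) * n) := by ring
        _ = 2 * K * Q ^ ((n : ℝ) + -γ * ((max n A : ℕ) : ℝ) + (1 - 2*γ) * ((max n B : ℕ) : ℝ)) := by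
            rw [← hnA, ← hnB, max_self]
            ring_nf
    · have hd3 : ∀ x : {x : Polynomial F // x.natDegree = n},
          (((x : Polynomial F) + b).natDegree : ℝ) = ((max n B : ℕ) : ℝ) := by
        intro x
        rw [natDegree_add_max (x : Polynomial F) b (by rw [x.2]; exact hnB), x.2]
      calc ∑' x : {x : Polynomial F // x.natDegree = n},
            Q ^ (-γ * (((x : Polynomial F) + a).natDegree : ℝ)) *
            Q ^ ((1 - 2*γ) * (((x : Polynomial F) + b).natDegree : ℝ))
          = (∑' x : {x : Polynomial F // x.natDegree = n},
              Q ^ (-γ * (((x : Polynomial F) + a).natDegree : ℝ)))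
            * Q ^ ((1 - 2*γ) * ((max n B : ℕ) : ℝ)) := by
            rw [← ENNReal.tsum_mul_right]
            apply tsum_congr; intro x
            rw [hd3 x]
        _ ≤ (K * Q ^ ((1 + -γ) * n)) * Q ^ ((1 - 2*γ) * ((max n B : ℕ) : ℝ)) := by
            gcongr
            exact geo1 ε (-γ) hε (by linarith) (by linarith) n a
        _ = K * Q ^ ((1 + -γ) * n + (1 - 2*γ) * ((max n B : ℕ) : ℝ)) := by
            rw [hadd]; ring
        _ ≤ 2 * K * Q ^ ((n : ℝ) + -γ * ((max n A : ℕ) : ℝ) + (1 - 2*γ) * ((max n B : ℕ) : ℝ)) := by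
            rw [← hnA, max_self]
            have h2 : (1 + -γ) * (n : ℝ) + (1 - 2*γ) * ((max n B : ℕ) : ℝ)
                = (n : ℝ) + -γ * (n : ℝ) + (1 - 2*γ) * ((max n B : ℕ) : ℝ) := by ring
            rw [h2]
            exact mul_le_mul_of_nonneg_right (by
              calc K = 1 * K := (one_mul K).symm
                _ ≤ 2 * K := by gcongr; norm_num) zero_le
  · by_cases hnB : n = B
    · have hd2 : ∀ x : {x : Polynomial F // x.natDegree = n},
          (((x : Polynomial F) + a).natDegree : ℝ) = ((max n A : ℕ) : ℝ) := by
        intro x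
        rw [natDegree_add_max (x : Polynomial F) a (by rw [x.2]; exact hnA), x.2]
      calc ∑' x : {x : Polynomial F // x.natDegree = n},
            Q ^ (-γ * (((x : Polynomial F) + a).natDegree : ℝ)) *
            Q ^ ((1 - 2*γ) * (((x : Polynomial F) + b).natDegree : ℝ))
          = Q ^ (-γ * ((max n A : ℕ) : ℝ)) *
            ∑' x : {x : Polynomial F // x.natDegree = n},
              Q ^ ((1 - 2*γ) * (((x : Polynomial F) + b).natDegree : ℝ)) := by
            rw [← ENNReal.tsum_mul_left]
            apply tsum_congr; intro x
            rw [hd2 x]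
        _ ≤ Q ^ (-γ * ((max n A : ℕ) : ℝ)) * (K * Q ^ ((1 + (1 - 2*γ)) * n)) := by
            gcongr
            exact geo1 ε (1 - 2*γ) hε (by linarith) (by linarith) n b
        _ = K * Q ^ (-γ * ((max n A : ℕ) : ℝ) + (1 + (1 - 2*γ)) * n) := by
            rw [hadd]; ring
        _ ≤ 2 * K * Q ^ ((n : ℝ) + -γ * ((max n A : ℕ) : ℝ) + (1 - 2*γ) * ((max n B : ℕ) : ℝ)) := by
            rw [← hnB, max_self]
            have h2 : -γ * ((max n A : ℕ) : ℝ) + (1 + (1 - 2*γ)) * (n : ℝ)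
                = (n : ℝ) + -γ * ((max n A : ℕ) : ℝ) + (1 - 2*γ) * (n : ℝ) := by ring
            rw [h2]
            exact mul_le_mul_of_nonneg_right (by
              calc K = 1 * K := (one_mul K).symm
                _ ≤ 2 * K := by gcongr; norm_num) zero_le
    · have hconst : ∀ x : {x : Polynomial F // x.natDegree = n},
          Q ^ (-γ * (((x : Polynomial F) + a).natDegree : ℝ)) *
          Q ^ ((1 - 2*γ) * (((x : Polynomial F) + b).natDegree : ℝ))
          ≤ Q ^ (-γ * ((max n A : ℕ) : ℝ) + (1 - 2*γ) * ((max n B : ℕ) : ℝ)) := by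
        intro x
        rw [natDegree_add_max (x : Polynomial F) a (by rw [x.2]; exact hnA), x.2,
          natDegree_add_max (x : Polynomial F) b (by rw [x.2]; exact hnB), x.2, hadd]
      calc ∑' x : {x : Polynomial F // x.natDegree = n},
            Q ^ (-γ * (((x : Polynomial F) + a).natDegree : ℝ)) *
            Q ^ ((1 - 2*γ) * (((x : Polynomial F) + b).natDegree : ℝ))
          ≤ Q ^ (n + 1) * Q ^ (-γ * ((max n A : ℕ) : ℝ) + (1 - 2*γ) * ((max n B : ℕ) : ℝ)) := by
            apply tsum_le_card _ _ n (fun x => x.1)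
            · intro y z hyz
              exact Subtype.ext hyz
            · intro x
              exact le_of_eq x.2
            · exact hconst
        _ = Q * Q ^ ((n : ℝ) + -γ * ((max n A : ℕ) : ℝ) + (1 - 2*γ) * ((max n B : ℕ) : ℝ)) := by
            have e0 : ((n:ℝ) + -γ * ((max n A : ℕ) : ℝ) + (1 - 2*γ) * ((max n B : ℕ) : ℝ))
                = ((n:ℝ)) + (-γ * ((max n A : ℕ) : ℝ) + (1 - 2*γ) * ((max n B : ℕ) : ℝ)) := by
              ring
            conv_lhs => rw [pow_succ, ← ENNReal.rpow_natCast Q n]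
            conv_rhs => rw [e0, hadd]
            ring
        _ ≤ 2 * K * Q ^ ((n : ℝ) + -γ * ((max n A : ℕ) : ℝ) + (1 - 2*γ) * ((max n B : ℕ) : ℝ)) := by
            apply mul_le_mul_of_nonneg_right _ zero_le
            calc Q = Q * 1 := (mul_one Q).symm
              _ ≤ Q * KK := by gcongr
              _ = 1 * K := by rw [hK, one_mul]
              _ ≤ 2 * K := by gcongr <;> norm_num

lemma total_bound (γ ε : ℝ) (hγ1 : 1/2 < γ) (hγ2 : γ < 2/3)
    (hε : 0 < ε) (hε1 : ε ≤ 2 - 3*γ) (hε2 : ε ≤ 2*γ - 1)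
    (a b : Polynomial F) :
    ∑' x : Polynomial F,
        (Fintype.card F : ℝ≥0∞) ^ (-γ * (x.natDegree : ℝ)) *
        (Fintype.card F : ℝ≥0∞) ^ (-γ * ((x + a).natDegree : ℝ)) *
        (Fintype.card F : ℝ≥0∞) ^ ((1 - 2*γ) * ((x + b).natDegree : ℝ))
      ≤ (2 * ((Fintype.card F : ℝ≥0∞) * (2 * (1 - (Fintype.card F : ℝ≥0∞) ^ (-ε))⁻¹)))
          * (2 * (2 * (1 - (Fintype.card F : ℝ≥0∞) ^ (-ε))⁻¹)) *
        (Fintype.card F : ℝ≥0∞) ^ ((1 - 2*γ) * ((a.natDegree : ℝ) + (b.natDegree : ℝ))) := by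
  classical
  set A := a.natDegree with hA
  set B := b.natDegree with hB
  set Q : ℝ≥0∞ := (Fintype.card F : ℝ≥0∞) with hQdef
  have hq1 : 1 < Fintype.card F := Fintype.one_lt_card
  have hQ : 1 < Q := by rw [hQdef]; exact_mod_cast hq1
  have hQt : Q ≠ ⊤ := ENNReal.natCast_ne_top _
  have hQ0 : Q ≠ 0 := (zero_lt_one.trans hQ).ne'
  have hadd : ∀ s t : ℝ, Q ^ (s + t) = Q ^ s * Q ^ t :=
    fun s t => ENNReal.rpow_add s t hQ0 hQt
  set KK : ℝ≥0∞ := 2 * (1 - Q ^ (-ε))⁻¹ with hKK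
  set Kin : ℝ≥0∞ := 2 * (Q * KK) with hKin
  set t : ℝ := (1 - 2*γ) * ((A : ℝ) + (B : ℝ)) with ht
  set T : Polynomial F → ℝ≥0∞ := fun x =>
    Q ^ (-γ * (x.natDegree : ℝ)) * Q ^ (-γ * ((x + a).natDegree : ℝ)) *
      Q ^ ((1 - 2*γ) * ((x + b).natDegree : ℝ)) with hT
  have e1 := (Equiv.sigmaFiberEquiv (fun x : Polynomial F => x.natDegree)).tsum_eq T
  calc ∑' x : Polynomial F, T x
      = ∑' (n : ℕ) (x : {x : Polynomial F // x.natDegree = n}), T x :=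
        by rw [← e1, ENNReal.tsum_sigma']; rfl
    _ ≤ ∑' n : ℕ, Q ^ (-γ * (n : ℝ)) * (Kin * Q ^
          ((n : ℝ) + -γ * ((max n A : ℕ) : ℝ) + (1 - 2*γ) * ((max n B : ℕ) : ℝ))) := by
        apply ENNReal.tsum_le_tsum
        intro n
        have hsplit : ∀ x : {x : Polynomial F // x.natDegree = n},
            T x = Q ^ (-γ * (n : ℝ)) *
              (Q ^ (-γ * (((x : Polynomial F) + a).natDegree : ℝ)) *
               Q ^ ((1 - 2*γ) * (((x : Polynomial F) + b).natDegree : ℝ))) := by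
          intro x
          rw [hT]
          simp only
          rw [x.2, mul_assoc]
        calc ∑' x : {x : Polynomial F // x.natDegree = n}, T x
            = Q ^ (-γ * (n : ℝ)) * ∑' x : {x : Polynomial F // x.natDegree = n},
                (Q ^ (-γ * (((x : Polynomial F) + a).natDegree : ℝ)) *
                 Q ^ ((1 - 2*γ) * (((x : Polynomial F) + b).natDegree : ℝ))) := by
              rw [← ENNReal.tsum_mul_left]
              exact tsum_congr hsplit
          _ ≤ Q ^ (-γ * (n : ℝ)) * (Kin * Q ^
                ((n : ℝ) + -γ * ((max n A : ℕ) : ℝ) + (1 - 2*γ) * ((max n B : ℕ) : ℝ))) := by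
              gcongr
              exact inner_bound γ ε hγ1 hγ2 hε hε1 hε2 a b n
    _ = Kin * ∑' n : ℕ, Q ^ (-γ * (n : ℝ) +
          ((n : ℝ) + -γ * ((max n A : ℕ) : ℝ) + (1 - 2*γ) * ((max n B : ℕ) : ℝ))) := by
        rw [← ENNReal.tsum_mul_left]
        apply tsum_congr
        intro n
        conv_rhs => rw [hadd]
        ring
    _ ≤ Kin * ∑' n : ℕ, (Q ^ (t + -(ε * |(n : ℝ) - (A : ℝ)|))
          + Q ^ (t + -(ε * |(n : ℝ) - (B : ℝ)|))) := by
        gcongr with n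
        have hmaxA : ((max n A : ℕ) : ℝ) = max (n : ℝ) (A : ℝ) := by push_cast; rfl
        have hmaxB : ((max n B : ℕ) : ℝ) = max (n : ℝ) (B : ℝ) := by push_cast; rfl
        rw [hmaxA, hmaxB]
        rcases outer_exp γ ε (n : ℝ) (A : ℝ) (B : ℝ) hγ1 hγ2 hε1 hε2 with h | h
        · exact le_trans (ENNReal.rpow_le_rpow_of_exponent_le hQ.le h) le_self_add
        · exact le_trans (ENNReal.rpow_le_rpow_of_exponent_le hQ.le h) le_add_self
    _ ≤ Kin * (Q ^ t * KK + Q ^ t * KK) := by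
        gcongr
        calc ∑' n : ℕ, (Q ^ (t + -(ε * |(n : ℝ) - (A : ℝ)|))
              + Q ^ (t + -(ε * |(n : ℝ) - (B : ℝ)|)))
            = (∑' n : ℕ, Q ^ (t + -(ε * |(n : ℝ) - (A : ℝ)|)))
              + ∑' n : ℕ, Q ^ (t + -(ε * |(n : ℝ) - (B : ℝ)|)) := ENNReal.tsum_add
          _ = Q ^ t * (∑' n : ℕ, Q ^ (-(ε * |(n : ℝ) - (A : ℝ)|)))
              + Q ^ t * ∑' n : ℕ, Q ^ (-(ε * |(n : ℝ) - (B : ℝ)|)) := by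
              rw [← ENNReal.tsum_mul_left, ← ENNReal.tsum_mul_left]
              congr 1 <;> exact tsum_congr fun n => by rw [hadd]
          _ ≤ Q ^ t * KK + Q ^ t * KK := by
              gcongr
              · exact abs_sum_le Q hQ hQt ε hε A
              · exact abs_sum_le Q hQ hQt ε hε B
    _ = Kin * (2 * KK) * Q ^ t := by ring

end Stmt12Aux

/-- Lemma (basic 2, first part): for `1/2 < γ < 2/3`, there is a constant
`C = C(γ, q)` such that for all nonzero `a, b ∈ F_q[t]`,
`∑_{x ≠ 0} q^{-γ deg x} q^{-γ deg(x+a)} q^{(1-2γ) deg(x+b)}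
  ≤ C q^{(1-2γ)(deg a + deg b)}`
(terms with `x + a = 0` or `x + b = 0` contribute zero). -/
theorem stmt_12 (F : Type*) [Field F] [Fintype F] (γ : ℝ)
    (hγ1 : 1 / 2 < γ) (hγ2 : γ < 2 / 3) :
    ∃ C : ℝ, 0 < C ∧ ∀ (a b : Polynomial F), a ≠ 0 → b ≠ 0 →
      ∑' x : {x : Polynomial F // x ≠ 0 ∧ x + a ≠ 0 ∧ x + b ≠ 0},
          (Fintype.card F : ℝ) ^ (-γ * ((x : Polynomial F).natDegree : ℝ)) *
            (Fintype.card F : ℝ) ^ (-γ * (((x : Polynomial F) + a).natDegree : ℝ)) *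
            (Fintype.card F : ℝ) ^ ((1 - 2 * γ) * (((x : Polynomial F) + b).natDegree : ℝ))
        ≤ C * (Fintype.card F : ℝ) ^
            ((1 - 2 * γ) * ((a.natDegree : ℝ) + (b.natDegree : ℝ))) := by
  classical
  set Q : ℝ≥0∞ := (Fintype.card F : ℝ≥0∞) with hQdef
  have hq1 : 1 < Fintype.card F := Fintype.one_lt_card
  have hQ : 1 < Q := by rw [hQdef]; exact_mod_cast hq1
  have hQt : Q ≠ ⊤ := ENNReal.natCast_ne_top _
  have hQ0 : Q ≠ 0 := (zero_lt_one.trans hQ).ne'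
  have hfin : ∀ e : ℝ, Q ^ e ≠ ⊤ := by
    intro e
    exact ne_top_of_le_ne_top (ENNReal.rpow_ne_top_of_nonneg (abs_nonneg e) hQt)
      (ENNReal.rpow_le_rpow_of_exponent_le hQ.le (le_abs_self e))
  set ε : ℝ := min (2 - 3*γ) (2*γ - 1) with hεdef
  have hε : 0 < ε := lt_min (by linarith) (by linarith)
  have hε1 : ε ≤ 2 - 3*γ := min_le_left _ _
  have hε2 : ε ≤ 2*γ - 1 := min_le_right _ _
  set E : ℝ≥0∞ := (2 * (Q * (2 * (1 - Q ^ (-ε))⁻¹))) * (2 * (2 * (1 - Q ^ (-ε))⁻¹)) with hE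
  have hr1 : Q ^ (-ε) < 1 := ENNReal.rpow_lt_one_of_one_lt_of_neg hQ (by linarith)
  have hsub0 : (1 - Q ^ (-ε)) ≠ 0 := by
    rw [Ne, tsub_eq_zero_iff_le]
    exact fun h => absurd h (not_le.mpr hr1)
  have hKKt : (2 * (1 - Q ^ (-ε))⁻¹ : ℝ≥0∞) ≠ ⊤ := by
    apply ENNReal.mul_ne_top (by norm_num)
    rw [Ne, ENNReal.inv_eq_top]
    · exact hsub0
  have hEt : E ≠ ⊤ := by
    rw [hE]
    apply ENNReal.mul_ne_top
    · apply ENNReal.mul_ne_top (by norm_num)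
      exact ENNReal.mul_ne_top hQt hKKt
    · exact ENNReal.mul_ne_top (by norm_num) hKKt
  refine ⟨E.toReal + 1, by positivity, ?_⟩
  intro a b ha hb
  set T : Polynomial F → ℝ≥0∞ := fun x =>
    Q ^ (-γ * (x.natDegree : ℝ)) * Q ^ (-γ * ((x + a).natDegree : ℝ)) *
      Q ^ ((1 - 2*γ) * ((x + b).natDegree : ℝ)) with hT
  have hTfin : ∀ x, T x ≠ ⊤ := by
    intro x
    exact ENNReal.mul_ne_top (ENNReal.mul_ne_top (hfin _) (hfin _)) (hfin _)
  have hptwise : ∀ x : {x : Polynomial F // x ≠ 0 ∧ x + a ≠ 0 ∧ x + b ≠ 0},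
      (Fintype.card F : ℝ) ^ (-γ * ((x : Polynomial F).natDegree : ℝ)) *
        (Fintype.card F : ℝ) ^ (-γ * (((x : Polynomial F) + a).natDegree : ℝ)) *
        (Fintype.card F : ℝ) ^ ((1 - 2 * γ) * (((x : Polynomial F) + b).natDegree : ℝ))
      = (T (x : Polynomial F)).toReal := by
    intro x
    rw [hT]
    simp only
    rw [ENNReal.toReal_mul, ENNReal.toReal_mul,
      ← ENNReal.toReal_rpow, ← ENNReal.toReal_rpow, ← ENNReal.toReal_rpow, hQdef,
      ENNReal.toReal_natCast]
  have hkey : (∑' x : {x : Polynomial F // x ≠ 0 ∧ x + a ≠ 0 ∧ x + b ≠ 0},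
      T (x : Polynomial F)) ≤ E * Q ^ ((1 - 2*γ) * ((a.natDegree : ℝ) + (b.natDegree : ℝ))) := by
    calc (∑' x : {x : Polynomial F // x ≠ 0 ∧ x + a ≠ 0 ∧ x + b ≠ 0}, T (x : Polynomial F))
        ≤ ∑' x : Polynomial F, T x :=
          ENNReal.tsum_comp_le_tsum_of_injective Subtype.val_injective T
      _ ≤ E * Q ^ ((1 - 2*γ) * ((a.natDegree : ℝ) + (b.natDegree : ℝ))) :=
          Stmt12Aux.total_bound γ ε hγ1 hγ2 hε hε1 hε2 a b
  have hRHSne : E * Q ^ ((1 - 2*γ) * ((a.natDegree : ℝ) + (b.natDegree : ℝ))) ≠ ⊤ :=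
    ENNReal.mul_ne_top hEt (hfin _)
  calc ∑' x : {x : Polynomial F // x ≠ 0 ∧ x + a ≠ 0 ∧ x + b ≠ 0},
        (Fintype.card F : ℝ) ^ (-γ * ((x : Polynomial F).natDegree : ℝ)) *
          (Fintype.card F : ℝ) ^ (-γ * (((x : Polynomial F) + a).natDegree : ℝ)) *
          (Fintype.card F : ℝ) ^ ((1 - 2 * γ) * (((x : Polynomial F) + b).natDegree : ℝ))
      = ∑' x : {x : Polynomial F // x ≠ 0 ∧ x + a ≠ 0 ∧ x + b ≠ 0},
          (T (x : Polynomial F)).toReal := by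
        exact tsum_congr hptwise
    _ = (∑' x : {x : Polynomial F // x ≠ 0 ∧ x + a ≠ 0 ∧ x + b ≠ 0},
          T (x : Polynomial F)).toReal :=
        (ENNReal.tsum_toReal_eq (fun x => hTfin _)).symm
    _ ≤ (E * Q ^ ((1 - 2*γ) * ((a.natDegree : ℝ) + (b.natDegree : ℝ)))).toReal :=
        ENNReal.toReal_mono hRHSne hkey
    _ = E.toReal * (Fintype.card F : ℝ) ^ ((1 - 2*γ) * ((a.natDegree : ℝ) + (b.natDegree : ℝ))) := by
        rw [ENNReal.toReal_mul, ← ENNReal.toReal_rpow, hQdef, ENNReal.toReal_natCast]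
    _ ≤ (E.toReal + 1) * (Fintype.card F : ℝ) ^
          ((1 - 2*γ) * ((a.natDegree : ℝ) + (b.natDegree : ℝ))) := by
        have hq0 : (0:ℝ) < (Fintype.card F : ℝ) := by
          exact_mod_cast Nat.lt_of_lt_of_le Nat.zero_lt_one hq1.le
        apply mul_le_mul_of_nonneg_right (by linarith)
        positivity
    _ = (E.toReal + 1) * (Fintype.card F : ℝ) ^
          ((1 - 2 * γ) * ((a.natDegree : ℝ) + (b.natDegree : ℝ))) := by norm_num
end

section
/- Let q be a prime power and 1/2 < γ < 2/3. There is a constant C depending only on γ and q such that for every nonzero b ∈ F_q[t], ∑_{x ∈ F_q[t], x ≠ 0} q^{-2γ deg x} · q^{(1-2γ) deg(x+b)} ≤ C · q^{(1-2γ) deg b}. -/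
open Polynomial

lemma aux_card (F : Type*) [Field F] [Fintype F] (d : ℕ) (s : Finset (Polynomial F))
    (hs : ∀ x ∈ s, x.natDegree ≤ d) : s.card ≤ Fintype.card F ^ (d + 1) := by
  haveI : Finite (degreeLT F (d+1)) :=
    Finite.of_equiv _ (degreeLTEquiv F (d+1)).toEquiv.symm
  have hmem : ∀ x : {x // x ∈ s}, (x : Polynomial F) ∈ degreeLT F (d+1) := by
    intro x
    rw [Polynomial.mem_degreeLT]
    calc (x : Polynomial F).degree ≤ (x : Polynomial F).natDegree := degree_le_natDegree
    _ ≤ (d : WithBot ℕ) := by exact_mod_cast Nat.cast_le.mpr (hs x x.2)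
    _ < (d+1 : ℕ) := by exact_mod_cast Nat.lt_succ_self d
  have hinj : Function.Injective (fun x : {x // x ∈ s} => (⟨x, hmem x⟩ : degreeLT F (d+1))) := by
    intro a b h
    simp only [Subtype.mk.injEq] at h
    exact Subtype.ext h
  calc s.card = Nat.card {x // x ∈ s} := (Nat.card_eq_finsetCard s).symm
  _ ≤ Nat.card (degreeLT F (d+1)) := Nat.card_le_card_of_injective _ hinj
  _ = Nat.card (Fin (d+1) → F) := Nat.card_congr (degreeLTEquiv F (d+1)).toEquiv
  _ = Fintype.card F ^ (d+1) := by simp [Nat.card_eq_fintype_card]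

lemma aux_summable (F : Type*) [Field F] [Fintype F] (α : ℝ) (hα : 1 < α) :
    Summable (fun x : Polynomial F => (Fintype.card F : ℝ) ^ (-α * (x.natDegree : ℝ))) := by
  set q : ℝ := (Fintype.card F : ℝ) with hqdef
  have hq1 : (1 : ℝ) < q := by
    rw [hqdef]; exact Nat.one_lt_cast.mpr Fintype.one_lt_card
  have hq0 : (0 : ℝ) < q := by linarith
  set r : ℝ := q ^ ((1 : ℝ) - α) with hrdef
  have hr0 : 0 ≤ r := (Real.rpow_pos_of_pos hq0 _).le
  have hr1 : r < 1 := Real.rpow_lt_one_of_one_lt_of_neg hq1 (by linarith)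
  have hfnn : ∀ x : Polynomial F, 0 ≤ q ^ (-α * (x.natDegree : ℝ)) :=
    fun x => (Real.rpow_pos_of_pos hq0 _).le
  apply summable_of_sum_le (c := q * (1 - r)⁻¹) hfnn
  intro u
  set n : ℕ := u.sup Polynomial.natDegree with hn
  have hmaps : ∀ x ∈ u, x.natDegree ∈ Finset.range (n + 1) := by
    intro x hx
    simp only [Finset.mem_range, Nat.lt_succ_iff]
    exact Finset.le_sup hx
  rw [← Finset.sum_fiberwise_of_maps_to hmaps]
  have hstep : ∀ d ∈ Finset.range (n+1),
      ∑ x ∈ u.filter (fun x => x.natDegree = d), q ^ (-α * (x.natDegree : ℝ)) ≤ q * r ^ d := by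
    intro d _
    have hsum : ∑ x ∈ u.filter (fun x => x.natDegree = d), q ^ (-α * (x.natDegree : ℝ))
        = (u.filter (fun x => x.natDegree = d)).card * q ^ (-α * (d : ℝ)) := by
      rw [Finset.sum_congr rfl (fun x hx => by
        rw [(Finset.mem_filter.mp hx).2]), Finset.sum_const, nsmul_eq_mul]
    rw [hsum]
    have hcard : ((u.filter (fun x => x.natDegree = d)).card : ℝ) ≤ q ^ ((d : ℝ) + 1) := by
      have := aux_card F d (u.filter (fun x => x.natDegree = d))
        (fun x hx => le_of_eq (Finset.mem_filter.mp hx).2)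
      calc ((u.filter (fun x => x.natDegree = d)).card : ℝ)
          ≤ ((Fintype.card F : ℕ) ^ (d+1) : ℕ) := by exact_mod_cast this
        _ = q ^ ((d : ℝ) + 1) := by
            push_cast
            rw [← Real.rpow_natCast q (d+1)]
            push_cast
            ring_nf
    calc ((u.filter (fun x => x.natDegree = d)).card : ℝ) * q ^ (-α * (d : ℝ))
        ≤ q ^ ((d : ℝ) + 1) * q ^ (-α * (d : ℝ)) := by
          apply mul_le_mul_of_nonneg_right hcard (Real.rpow_pos_of_pos hq0 _).le
      _ = q * r ^ d := by
          have h1 : q * r ^ d = q ^ ((1:ℝ) + (1 - α) * d) := by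
            rw [hrdef, ← Real.rpow_natCast (q ^ ((1:ℝ) - α)) d, ← Real.rpow_mul hq0.le,
              Real.rpow_add hq0, Real.rpow_one]
          rw [h1, ← Real.rpow_add hq0]
          ring_nf
  calc ∑ d ∈ Finset.range (n+1), ∑ x ∈ u.filter (fun x => x.natDegree = d),
          q ^ (-α * (x.natDegree : ℝ))
      ≤ ∑ d ∈ Finset.range (n+1), q * r ^ d := Finset.sum_le_sum hstep
    _ = q * ∑ d ∈ Finset.range (n+1), r ^ d := by rw [Finset.mul_sum]
    _ ≤ q * (1 - r)⁻¹ := by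
        apply mul_le_mul_of_nonneg_left _ hq0.le
        calc ∑ d ∈ Finset.range (n+1), r ^ d ≤ ∑' d : ℕ, r ^ d :=
              Summable.sum_le_tsum _ (fun i _ => pow_nonneg hr0 i) (summable_geometric_of_lt_one hr0 hr1)
          _ = (1 - r)⁻¹ := tsum_geometric_of_lt_one hr0 hr1

lemma aux_exp (γ a c m : ℝ) (hγ1 : 1/2 < γ) (hγ2 : γ < 2/3)
    (ha : 0 ≤ a) (hc : 0 ≤ c) (hm : 0 ≤ m)
    (h1 : m ≤ max a c) (h2 : a ≤ max c m) (h3 : c ≤ max a m) :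
    -(2*γ)*a + (1-2*γ)*c ≤ (1-2*γ)*m + -(γ+1/2)*a ∨
    -(2*γ)*a + (1-2*γ)*c ≤ (1-2*γ)*m + -(γ+1/2)*c := by
  rcases le_total a c with h | h
  · left
    rcases le_total a m with ham | ham
    · have hcm : c = m := le_antisymm (h3.trans (max_le ham le_rfl))
        (h1.trans (max_le h le_rfl))
      rw [hcm]
      nlinarith [mul_nonneg ha (by linarith : (0:ℝ) ≤ γ - 1/2)]
    · nlinarith [mul_nonneg ha (by linarith : (0:ℝ) ≤ γ - 1/2),
        mul_nonneg (by linarith : (0:ℝ) ≤ c - m) (by linarith : (0:ℝ) ≤ 2*γ - 1)]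
  · right
    rcases le_total c m with hcm | hcm
    · have ham : a = m := le_antisymm (h2.trans (max_le hcm le_rfl))
        (h1.trans (max_le le_rfl h))
      rw [ham]
      nlinarith [mul_nonneg (by linarith : (0:ℝ) ≤ m - c) (by linarith : (0:ℝ) ≤ 3/2 - γ),
        mul_nonneg hm (by linarith : (0:ℝ) ≤ γ - 1/2)]
    · nlinarith [mul_nonneg (by linarith : (0:ℝ) ≤ c - m) (by linarith : (0:ℝ) ≤ 2*γ - 1),
        mul_nonneg hc (by linarith : (0:ℝ) ≤ γ - 1/2),
        mul_nonneg (by linarith : (0:ℝ) ≤ a - c) (by linarith : (0:ℝ) ≤ 2*γ)]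

/-- Lemma (basic 2, second part, `a = 0`): for `1/2 < γ < 2/3`, there is a
constant `C = C(γ, q)` such that for every nonzero `b ∈ F_q[t]`,
`∑_{x ≠ 0} q^{-2γ deg x} q^{(1-2γ) deg(x+b)} ≤ C q^{(1-2γ) deg b}`
(the term with `x + b = 0` contributes zero). -/
theorem stmt_13 (F : Type*) [Field F] [Fintype F] (γ : ℝ)
    (hγ1 : 1 / 2 < γ) (hγ2 : γ < 2 / 3) :
    ∃ C : ℝ, 0 < C ∧ ∀ (b : Polynomial F), b ≠ 0 →
      ∑' x : {x : Polynomial F // x ≠ 0 ∧ x + b ≠ 0},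
          (Fintype.card F : ℝ) ^ (-(2 * γ) * ((x : Polynomial F).natDegree : ℝ)) *
            (Fintype.card F : ℝ) ^ ((1 - 2 * γ) * (((x : Polynomial F) + b).natDegree : ℝ))
        ≤ C * (Fintype.card F : ℝ) ^ ((1 - 2 * γ) * (b.natDegree : ℝ)) := by
  have hq1 : (1 : ℝ) < (Fintype.card F : ℝ) := Nat.one_lt_cast.mpr Fintype.one_lt_card
  have hq0 : (0 : ℝ) < (Fintype.card F : ℝ) := by linarith
  set q : ℝ := (Fintype.card F : ℝ) with hqdef
  set α : ℝ := γ + 1/2 with hα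
  have hαgt : 1 < α := by rw [hα]; linarith
  have hf : Summable (fun x : Polynomial F => q ^ (-α * (x.natDegree : ℝ))) :=
    aux_summable F α hαgt
  set S : ℝ := ∑' x : Polynomial F, q ^ (-α * (x.natDegree : ℝ)) with hS
  have hS1 : (1 : ℝ) ≤ S := by
    have h0 := Summable.le_tsum hf 0 (fun j _ => (Real.rpow_pos_of_pos hq0 _).le)
    simpa only [Polynomial.natDegree_zero, Nat.cast_zero, mul_zero, Real.rpow_zero] using h0
  refine ⟨2 * S, by linarith, ?_⟩
  intro b hb
  set m : ℝ := (b.natDegree : ℝ) with hm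
  have hm0 : 0 ≤ m := Nat.cast_nonneg _
  have hfb : Summable (fun x : Polynomial F => q ^ (-α * (((x + b).natDegree : ℕ) : ℝ))) := by
    have := hf.comp_injective (add_left_injective b)
    exact this
  have hg : Summable (fun x : Polynomial F =>
      q ^ ((1-2*γ)*m) * (q ^ (-α * (x.natDegree : ℝ)) + q ^ (-α * (((x+b).natDegree : ℕ) : ℝ)))) :=
    (hf.add hfb).mul_left _
  have key : ∀ x : Polynomial F,
      q ^ (-(2 * γ) * (x.natDegree : ℝ)) * q ^ ((1 - 2 * γ) * (((x + b).natDegree : ℕ) : ℝ))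
      ≤ q ^ ((1-2*γ)*m) *
        (q ^ (-α * (x.natDegree : ℝ)) + q ^ (-α * (((x+b).natDegree : ℕ) : ℝ))) := by
    intro x
    set a : ℝ := (x.natDegree : ℝ) with ha
    set c : ℝ := (((x+b).natDegree : ℕ) : ℝ) with hc
    have ha0 : 0 ≤ a := Nat.cast_nonneg _
    have hc0 : 0 ≤ c := Nat.cast_nonneg _
    have h1 : m ≤ max a c := by
      have := Polynomial.natDegree_sub_le (x + b) x
      rw [add_sub_cancel_left] at this
      rw [hm, ha, hc, max_comm]
      exact_mod_cast le_trans this (by push_cast; exact le_refl _)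
    have h2 : a ≤ max c m := by
      have := Polynomial.natDegree_sub_le (x + b) b
      rw [add_sub_cancel_right] at this
      rw [hm, ha, hc]
      exact_mod_cast this
    have h3 : c ≤ max a m := by
      have := Polynomial.natDegree_add_le x b
      rw [hm, ha, hc]
      exact_mod_cast this
    have hexp := aux_exp γ a c m hγ1 hγ2 ha0 hc0 hm0 h1 h2 h3
    have hlhs : q ^ (-(2 * γ) * a) * q ^ ((1 - 2 * γ) * c)
        = q ^ (-(2*γ)*a + (1-2*γ)*c) := (Real.rpow_add hq0 _ _).symm
    rw [hlhs]
    rcases hexp with hle | hle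
    · calc q ^ (-(2*γ)*a + (1-2*γ)*c) ≤ q ^ ((1-2*γ)*m + -(γ+1/2)*a) :=
            Real.rpow_le_rpow_of_exponent_le hq1.le hle
        _ = q ^ ((1-2*γ)*m) * q ^ (-α * a) := by rw [Real.rpow_add hq0, hα]
        _ ≤ q ^ ((1-2*γ)*m) * (q ^ (-α * a) + q ^ (-α * c)) := by
            apply mul_le_mul_of_nonneg_left _ (Real.rpow_pos_of_pos hq0 _).le
            exact le_add_of_nonneg_right (Real.rpow_pos_of_pos hq0 _).le
    · calc q ^ (-(2*γ)*a + (1-2*γ)*c) ≤ q ^ ((1-2*γ)*m + -(γ+1/2)*c) :=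
            Real.rpow_le_rpow_of_exponent_le hq1.le hle
        _ = q ^ ((1-2*γ)*m) * q ^ (-α * c) := by rw [Real.rpow_add hq0, hα]
        _ ≤ q ^ ((1-2*γ)*m) * (q ^ (-α * a) + q ^ (-α * c)) := by
            apply mul_le_mul_of_nonneg_left _ (Real.rpow_pos_of_pos hq0 _).le
            exact le_add_of_nonneg_left (Real.rpow_pos_of_pos hq0 _).le
  have hGnn : ∀ x : Polynomial F, 0 ≤ q ^ ((1-2*γ)*m) *
      (q ^ (-α * (x.natDegree : ℝ)) + q ^ (-α * (((x+b).natDegree : ℕ) : ℝ))) := by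
    intro x
    positivity
  have hsub : Summable (fun x : {x : Polynomial F // x ≠ 0 ∧ x + b ≠ 0} =>
      q ^ (-(2 * γ) * ((x : Polynomial F).natDegree : ℝ)) *
        q ^ ((1 - 2 * γ) * (((x : Polynomial F) + b).natDegree : ℝ))) := by
    refine Summable.of_nonneg_of_le
      (fun x => mul_nonneg (Real.rpow_pos_of_pos hq0 _).le (Real.rpow_pos_of_pos hq0 _).le)
      (fun x => key (x : Polynomial F)) ?_
    exact hg.comp_injective Subtype.val_injective
  have main : ∑' x : {x : Polynomial F // x ≠ 0 ∧ x + b ≠ 0},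
        q ^ (-(2 * γ) * ((x : Polynomial F).natDegree : ℝ)) *
          q ^ ((1 - 2 * γ) * (((x : Polynomial F) + b).natDegree : ℝ))
      ≤ ∑' x : Polynomial F, q ^ ((1-2*γ)*m) *
          (q ^ (-α * (x.natDegree : ℝ)) + q ^ (-α * (((x+b).natDegree : ℕ) : ℝ))) :=
    Summable.tsum_le_tsum_of_inj Subtype.val Subtype.val_injective (fun c _ => hGnn c)
      (fun x => key (x : Polynomial F)) hsub hg
  have htr : (∑' x : Polynomial F, q ^ (-α * (((x+b).natDegree : ℕ) : ℝ))) = S := by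
    have he := Equiv.tsum_eq (Equiv.addRight b)
      (fun x : Polynomial F => q ^ (-α * (x.natDegree : ℝ)))
    simp only [Equiv.coe_addRight] at he
    rw [hS, ← he]
  have hGsum : (∑' x : Polynomial F, q ^ ((1-2*γ)*m) *
      (q ^ (-α * (x.natDegree : ℝ)) + q ^ (-α * (((x+b).natDegree : ℕ) : ℝ))))
      = 2 * S * q ^ ((1 - 2 * γ) * m) := by
    rw [tsum_mul_left, Summable.tsum_add hf hfb, htr, ← hS]
    ring
  exact le_trans main (le_of_eq hGsum)
end

section
/- Let H and K be positive integers. If a family F of vectors in (F_q[t])^H contains no vectorial sunflower of K petals, then |F| ≤ H! · ((H^2 - H + 1)·K)^H. -/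
/-- `T` is a vectorial sunflower of `K` petals: `K` distinct vectors such that,
for some set `I` of coordinates, all vectors agree on the coordinates in `I`,
and after deleting the coordinates in `I` the resulting vectors have pairwise
disjoint sets of entries. -/
def IsVectorialSunflower {F : Type*} [Field F] {H : ℕ} (K : ℕ)
    (T : Finset (Fin H → Polynomial F)) : Prop :=
  T.card = K ∧ ∃ I : Set (Fin H),
    (∀ v ∈ T, ∀ w ∈ T, ∀ i ∈ I, v i = w i) ∧
    (∀ v ∈ T, ∀ w ∈ T, v ≠ w → ∀ i ∉ I, ∀ j ∉ I, v i ≠ w j)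

private lemma sunflower_key {F : Type*} [Field F] (H K : ℕ) (hK : 0 < K) :
    ∀ n (J : Finset (Fin H)), J.card = n →
    ∀ Fam : Finset (Fin H → Polynomial F),
      (¬ ∃ T ⊆ Fam, IsVectorialSunflower K T) →
      (∀ v ∈ Fam, ∀ w ∈ Fam, ∀ i ∉ J, v i = w i) →
      Fam.card ≤ K ^ n * (n.factorial) ^ 2 := by
  intro n
  induction n using Nat.strong_induction_on with
  | _ n IH =>
  intro J hJ Fam hsun hagree
  classical
  rcases Finset.eq_empty_or_nonempty J with rfl | hJne
  · simp only [Finset.card_empty] at hJ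
    subst hJ
    simp only [pow_zero, Nat.factorial_zero, one_pow, mul_one]
    refine Finset.card_le_one.2 ?_
    intro a ha b hb
    funext i
    exact hagree a ha b hb i (by simp)
  · obtain ⟨j0, hj0⟩ := hJne
    have hn : 0 < n := hJ ▸ Finset.card_pos.2 ⟨j0, hj0⟩
    obtain ⟨m, rfl⟩ : ∃ m, n = m + 1 := ⟨n - 1, by omega⟩
    -- pick a maximal pairwise-J-disjoint subfamily M
    obtain ⟨M, hMmem, hMmax⟩ :=
      Finset.exists_max_image
        (Fam.powerset.filter fun M =>
          ∀ a ∈ M, ∀ b ∈ M, a ≠ b → ∀ i ∈ J, ∀ j ∈ J, a i ≠ b j)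
        Finset.card ⟨∅, by simp⟩
    obtain ⟨hMF', hPM⟩ := Finset.mem_filter.1 hMmem
    have hMF : M ⊆ Fam := Finset.mem_powerset.1 hMF'
    -- M has fewer than K elements, else it contains a sunflower
    have hMltK : M.card < K := by
      by_contra h
      push_neg at h
      obtain ⟨T, hTM, hTcard⟩ := Finset.exists_subset_card_eq h
      refine hsun ⟨T, hTM.trans hMF, hTcard, (↑J : Set (Fin H))ᶜ, ?_, ?_⟩
      · intro v hv w hw i hi
        exact hagree v (hMF (hTM hv)) w (hMF (hTM hw)) i (by simpa using hi)
      · intro v hv w hw hvw i hi j hj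
        exact hPM v (hTM hv) w (hTM hw) hvw i (by simpa using hi) j
          (by simpa using hj)
    -- every vector of Fam shares an entry (within J) with some vector of M
    have hcov : ∀ v ∈ Fam, ∃ w ∈ M, ∃ i ∈ J, ∃ j ∈ J, v i = w j := by
      intro v hv
      by_cases hvM : v ∈ M
      · exact ⟨v, hvM, j0, hj0, j0, hj0, rfl⟩
      · have hins : insert v M ∈ Fam.powerset :=
          Finset.mem_powerset.2 (Finset.insert_subset hv hMF)
        have hnot : ¬ ∀ a ∈ insert v M, ∀ b ∈ insert v M, a ≠ b →
            ∀ i ∈ J, ∀ j ∈ J, a i ≠ b j := by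
          intro hPins
          have h1 := hMmax (insert v M) (Finset.mem_filter.2 ⟨hins, hPins⟩)
          rw [Finset.card_insert_of_notMem hvM] at h1
          omega
        push_neg at hnot
        obtain ⟨a, ha, b, hb, hab, i, hi, j, hj, hij⟩ := hnot
        rcases Finset.mem_insert.1 ha with rfl | haM
        · rcases Finset.mem_insert.1 hb with rfl | hbM
          · exact absurd rfl hab
          · exact ⟨b, hbM, i, hi, j, hj, hij⟩
        · rcases Finset.mem_insert.1 hb with rfl | hbM
          · exact ⟨a, haM, j, hj, i, hi, hij.symm⟩
          · exact absurd hij (hPM a haM b hbM hab i hi j hj)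
    -- the finite set of entries of M on coordinates of J
    set E : Finset (Polynomial F) := (M ×ˢ J).image fun p => p.1 p.2 with hE
    have hEcard : E.card ≤ K * (m + 1) := by
      calc E.card ≤ (M ×ˢ J).card := Finset.card_image_le
        _ = M.card * J.card := Finset.card_product _ _
        _ ≤ K * (m + 1) := by
            rw [hJ]
            exact Nat.mul_le_mul_right _ (le_of_lt hMltK)
    have hsub : Fam ⊆ (J ×ˢ E).biUnion
        fun q => Fam.filter fun v => v q.1 = q.2 := by
      intro v hv
      obtain ⟨w, hw, i, hi, j, hj, hij⟩ := hcov v hv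
      refine Finset.mem_biUnion.2 ⟨(i, w j), ?_, Finset.mem_filter.2 ⟨hv, hij⟩⟩
      exact Finset.mem_product.2
        ⟨hi, Finset.mem_image.2 ⟨(w, j), Finset.mem_product.2 ⟨hw, hj⟩, rfl⟩⟩
    -- each fiber satisfies the inductive bound with one fewer active coordinate
    have hfiber : ∀ q ∈ J ×ˢ E,
        (Fam.filter fun v => v q.1 = q.2).card ≤ K ^ m * (m.factorial) ^ 2 := by
      intro q hq
      obtain ⟨hq1, _⟩ := Finset.mem_product.1 hq
      refine IH m (Nat.lt_succ_self m) (J.erase q.1) ?_ _ ?_ ?_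
      · rw [Finset.card_erase_of_mem hq1, hJ]
        omega
      · rintro ⟨T, hT, hTs⟩
        exact hsun ⟨T, hT.trans (Finset.filter_subset _ _), hTs⟩
      · intro v hv w hw k hk
        obtain ⟨hvF, hvq⟩ := Finset.mem_filter.1 hv
        obtain ⟨hwF, hwq⟩ := Finset.mem_filter.1 hw
        by_cases hkq : k = q.1
        · subst hkq; rw [hvq, hwq]
        · exact hagree v hvF w hwF k
            (fun hkJ => hk (Finset.mem_erase.2 ⟨hkq, hkJ⟩))
    calc Fam.card
        ≤ ((J ×ˢ E).biUnion fun q => Fam.filter fun v => v q.1 = q.2).card :=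
          Finset.card_le_card hsub
      _ ≤ ∑ q ∈ J ×ˢ E, (Fam.filter fun v => v q.1 = q.2).card :=
          Finset.card_biUnion_le
      _ ≤ (J ×ˢ E).card * (K ^ m * (m.factorial) ^ 2) := by
          simpa using Finset.sum_le_card_nsmul _ _ _ hfiber
      _ ≤ ((m + 1) * (K * (m + 1))) * (K ^ m * (m.factorial) ^ 2) := by
          refine Nat.mul_le_mul_right _ ?_
          rw [Finset.card_product, hJ]
          exact Nat.mul_le_mul_left _ hEcard
      _ = K ^ (m + 1) * ((m + 1).factorial) ^ 2 := by
          rw [pow_succ, Nat.factorial_succ]; ring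

/-- Vectorial sunflower lemma: a family of vectors in `(F_q[t])^H` containing
no vectorial sunflower of `K` petals has at most `H!·((H² − H + 1)·K)^H`
elements. -/
theorem stmt_14 {F : Type*} [Field F] [Fintype F] (H K : ℕ) (hH : 0 < H) (hK : 0 < K)
    (Fam : Finset (Fin H → Polynomial F))
    (hsun : ¬ ∃ T ⊆ Fam, IsVectorialSunflower K T) :
    Fam.card ≤ H.factorial * ((H ^ 2 - H + 1) * K) ^ H := by
  have h1 := sunflower_key H K hK H Finset.univ (by simp) Fam hsun
    (fun v _ w _ i hi => absurd (Finset.mem_univ i) hi)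
  have hle : H ≤ H ^ 2 - H + 1 := by
    obtain ⟨m, rfl⟩ : ∃ m, H = m + 1 := ⟨H - 1, by omega⟩
    have h2 : (m + 1) ^ 2 = m * m + 2 * m + 1 := by ring
    rw [h2]
    generalize m * m = a
    omega
  calc Fam.card ≤ K ^ H * (H.factorial) ^ 2 := h1
    _ = H.factorial * (H.factorial * K ^ H) := by ring
    _ ≤ H.factorial * ((H ^ 2 - H + 1) ^ H * K ^ H) := by
        refine Nat.mul_le_mul_left _ (Nat.mul_le_mul_right _ ?_)
        calc H.factorial ≤ H ^ H := Nat.factorial_le_pow H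
          _ ≤ (H ^ 2 - H + 1) ^ H := Nat.pow_le_pow_left hle H
    _ = H.factorial * ((H ^ 2 - H + 1) * K) ^ H := by rw [mul_pow]
end

section
/- Let q be a prime power and γ = 7/11. There is a constant C depending only on q such that for every nonzero n ∈ F_q[t] with deg n sufficiently large, ∑_{x1 nonzero} q^{-γ deg x1} · (∑_{x2, x3 nonzero, x2 + x3 = n - x1} q^{-γ(deg x2 + deg x3)})^2 ≤ C·q^{(3 - 5γ) deg n} = C·q^{-(2/11) deg n}. -/
open Polynomial Finset

namespace Stmt18

/-- finite geometric sum bound -/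
lemma geo1 {x : ℝ} (hx0 : 0 ≤ x) (hx1 : x < 1) (n : ℕ) :
    ∑ i ∈ Finset.range n, x ^ i ≤ (1 - x)⁻¹ := by
  have := Summable.sum_le_tsum (Finset.range n) (fun i _ => pow_nonneg hx0 i)
    (summable_geometric_of_lt_one hx0 hx1)
  rwa [tsum_geometric_of_lt_one hx0 hx1] at this

/-- 2D geometric bound over a finset of keys with an injection into ℕ × ℕ. -/
lemma geo2 {x y : ℝ} (hx0 : 0 ≤ x) (hx1 : x < 1) (hy0 : 0 ≤ y) (hy1 : y < 1)
    (T : Finset (ℕ × ℕ)) (f : ℕ × ℕ → ℕ × ℕ) (hinj : Set.InjOn f T) :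
    ∑ p ∈ T, x ^ (f p).1 * y ^ (f p).2 ≤ (1 - x)⁻¹ * (1 - y)⁻¹ := by
  rw [show ∑ p ∈ T, x ^ (f p).1 * y ^ (f p).2
      = ∑ e ∈ T.image f, x ^ e.1 * y ^ e.2 from
    (Finset.sum_image (f := fun e : ℕ × ℕ => x ^ e.1 * y ^ e.2)
      (fun a ha b hb h => hinj ha hb h)).symm]
  set S := T.image f with hS
  set A := S.sup (fun e => max e.1 e.2) + 1 with hA
  have hsub : S ⊆ Finset.range A ×ˢ Finset.range A := by
    intro e he
    have h1 : max e.1 e.2 ≤ S.sup (fun e => max e.1 e.2) :=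
      Finset.le_sup (f := fun e : ℕ × ℕ => max e.1 e.2) he
    simp only [Finset.mem_product, Finset.mem_range]
    omega
  calc ∑ e ∈ S, x ^ e.1 * y ^ e.2
      ≤ ∑ e ∈ Finset.range A ×ˢ Finset.range A, x ^ e.1 * y ^ e.2 :=
        Finset.sum_le_sum_of_subset_of_nonneg hsub
          (fun e _ _ => mul_nonneg (pow_nonneg hx0 _) (pow_nonneg hy0 _))
    _ = (∑ i ∈ Finset.range A, x ^ i) * (∑ j ∈ Finset.range A, y ^ j) := by
        rw [Finset.sum_product, Finset.sum_mul]
        exact Finset.sum_congr rfl fun i _ => by rw [Finset.mul_sum]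
    _ ≤ (1 - x)⁻¹ * (1 - y)⁻¹ := by
        apply mul_le_mul (geo1 hx0 hx1 A) (geo1 hy0 hy1 A)
          (Finset.sum_nonneg fun j _ => pow_nonneg hy0 j)
          (inv_nonneg.mpr (by linarith))

variable {F : Type*} [Field F] [Fintype F]

/-- Cardinality bound: polynomials of natDegree ≤ d. -/
lemma card_le_pow (d : ℕ) (s : Finset (Polynomial F)) (h : ∀ p ∈ s, p.natDegree ≤ d) :
    (s.card : ℝ) ≤ (Fintype.card F : ℝ) ^ (d + 1) := by
  have key : s.card ≤ Fintype.card F ^ (d + 1) := by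
    classical
    have hinj : Function.Injective
        (fun p : {z // z ∈ s} => fun i : Fin (d + 1) => (p : Polynomial F).coeff i) := by
      intro p q hpq
      apply Subtype.ext
      apply Polynomial.ext
      intro i
      by_cases hi : i < d + 1
      · exact congrFun hpq ⟨i, hi⟩
      · rw [Polynomial.coeff_eq_zero_of_natDegree_lt, Polynomial.coeff_eq_zero_of_natDegree_lt]
        · exact lt_of_le_of_lt (h q q.2) (by omega)
        · exact lt_of_le_of_lt (h p p.2) (by omega)
    have := Fintype.card_le_of_injective _ hinj
    simpa [Fintype.card_fun] using this
  calc (s.card : ℝ) ≤ ((Fintype.card F ^ (d + 1) : ℕ) : ℝ) := by exact_mod_cast key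
    _ = (Fintype.card F : ℝ) ^ (d + 1) := by push_cast; ring

/-- One branch of the core bound: summing over polynomials `p` with
`deg p ≤ deg (m - p)`. -/
lemma branch (m : Polynomial F) (α β : ℝ)
    (hα : 0 < 1 + α) (hs : 1 + α + β < 0)
    (s : Finset (Polynomial F)) (hcond : ∀ p ∈ s, p.natDegree ≤ (m - p).natDegree) :
    ∑ p ∈ s, (Fintype.card F : ℝ) ^ (α * p.natDegree + β * (m - p).natDegree)
      ≤ (Fintype.card F : ℝ) * (1 - (Fintype.card F : ℝ) ^ (-(1 + α)))⁻¹
          * (1 - (Fintype.card F : ℝ) ^ (1 + α + β))⁻¹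
          * (Fintype.card F : ℝ) ^ ((1 + α + β) * m.natDegree) := by
  classical
  set r : ℝ := (Fintype.card F : ℝ) with hrdef
  have hq : 1 < Fintype.card F := Fintype.one_lt_card
  have hr1 : (1 : ℝ) < r := by rw [hrdef]; exact_mod_cast hq
  have hr0 : (0 : ℝ) < r := lt_trans one_pos hr1
  set M := m.natDegree with hMdef
  set k : Polynomial F → ℕ × ℕ := fun p => (p.natDegree, (m - p).natDegree) with hk
  set x : ℝ := r ^ (-(1 + α)) with hxdef
  set Y : ℝ := r ^ (1 + α + β) with hYdef
  have hx0 : 0 ≤ x := Real.rpow_nonneg hr0.le _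
  have hx1 : x < 1 := Real.rpow_lt_one_of_one_lt_of_neg hr1 (by linarith)
  have hy0 : 0 ≤ Y := Real.rpow_nonneg hr0.le _
  have hy1 : Y < 1 := Real.rpow_lt_one_of_one_lt_of_neg hr1 hs
  -- membership facts for keys
  have hkey : ∀ y ∈ s.image k, y.1 ≤ y.2 ∧ M ≤ y.2 := by
    intro y hy
    obtain ⟨p, hp, rfl⟩ := Finset.mem_image.mp hy
    refine ⟨hcond p hp, ?_⟩
    have hpm : p + (m - p) = m := by ring
    have : M ≤ max p.natDegree (m - p).natDegree := by
      conv_lhs => rw [hMdef, ← hpm]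
      exact Polynomial.natDegree_add_le _ _
    simpa [max_eq_right (hcond p hp)] using this
  -- per key constant value bound
  have perkey : ∀ y ∈ s.image k,
      ∑ p ∈ s.filter (fun p => k p = y), r ^ (α * p.natDegree + β * (m - p).natDegree)
        ≤ r ^ (1 + (1 + α + β) * (M : ℝ)) * (x ^ (y.2 - y.1) * Y ^ (y.2 - M)) := by
    intro y hy
    obtain ⟨hab, hMb⟩ := hkey y hy
    have hconst : ∑ p ∈ s.filter (fun p => k p = y), r ^ (α * p.natDegree + β * (m - p).natDegree)
        = ((s.filter (fun p => k p = y)).card : ℝ) * r ^ (α * y.1 + β * y.2) := by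
      rw [Finset.sum_congr rfl (fun p hp => ?_), Finset.sum_const, nsmul_eq_mul]
      have := (Finset.mem_filter.mp hp).2
      rw [hk] at this
      simp only at this
      rw [← this]
    rw [hconst]
    have hcard : ((s.filter (fun p => k p = y)).card : ℝ) ≤ r ^ (y.1 + 1) := by
      apply card_le_pow
      intro p hp
      have := (Finset.mem_filter.mp hp).2
      rw [hk] at this
      simp only at this
      rw [← this]
    have hw0 : (0:ℝ) ≤ r ^ (α * y.1 + β * y.2) := Real.rpow_nonneg hr0.le _
    calc ((s.filter (fun p => k p = y)).card : ℝ) * r ^ (α * y.1 + β * y.2)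
        ≤ r ^ (y.1 + 1) * r ^ (α * y.1 + β * y.2) := mul_le_mul_of_nonneg_right hcard hw0
      _ = r ^ (1 + (1 + α + β) * (M : ℝ)) * (x ^ (y.2 - y.1) * Y ^ (y.2 - M)) := by
          rw [hxdef, hYdef]
          rw [← Real.rpow_natCast r (y.1 + 1), ← Real.rpow_natCast (r ^ (-(1 + α))) (y.2 - y.1),
            ← Real.rpow_natCast (r ^ (1 + α + β)) (y.2 - M),
            ← Real.rpow_mul hr0.le, ← Real.rpow_mul hr0.le,
            ← Real.rpow_add hr0, ← Real.rpow_add hr0, ← Real.rpow_add hr0]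
          congr 1
          push_cast [Nat.cast_sub hab, Nat.cast_sub hMb]
          ring
  -- assemble
  rw [← Finset.sum_fiberwise_of_maps_to (fun p hp => Finset.mem_image_of_mem k hp)
    (fun p => r ^ (α * p.natDegree + β * (m - p).natDegree))]
  calc ∑ y ∈ s.image k, ∑ p ∈ s.filter (fun p => k p = y),
          r ^ (α * p.natDegree + β * (m - p).natDegree)
      ≤ ∑ y ∈ s.image k, r ^ (1 + (1 + α + β) * (M : ℝ)) * (x ^ (y.2 - y.1) * Y ^ (y.2 - M)) :=
        Finset.sum_le_sum perkey
    _ = r ^ (1 + (1 + α + β) * (M : ℝ)) *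
          ∑ y ∈ s.image k, x ^ ((fun y : ℕ × ℕ => (y.2 - y.1, y.2 - M)) y).1
            * Y ^ ((fun y : ℕ × ℕ => (y.2 - y.1, y.2 - M)) y).2 := by
        rw [Finset.mul_sum]
    _ ≤ r ^ (1 + (1 + α + β) * (M : ℝ)) * ((1 - x)⁻¹ * (1 - Y)⁻¹) := by
        apply mul_le_mul_of_nonneg_left _ (by positivity)
        apply geo2 hx0 hx1 hy0 hy1
        intro y1 h1 y2 h2 heq
        simp only [Finset.coe_image, Set.mem_image] at h1 h2
        obtain ⟨p1, hp1, hy1'⟩ := h1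
        obtain ⟨p2, hp2, hy2'⟩ := h2
        have c1 := hkey y1 (Finset.mem_image.mpr ⟨p1, hp1, hy1'⟩)
        have c2 := hkey y2 (Finset.mem_image.mpr ⟨p2, hp2, hy2'⟩)
        have e1 : y1.2 - y1.1 = y2.2 - y2.1 := congrArg Prod.fst heq
        have e2 : y1.2 - M = y2.2 - M := congrArg Prod.snd heq
        have : y1.2 = y2.2 := by omega
        have : y1.1 = y2.1 := by omega
        exact Prod.ext ‹y1.1 = y2.1› ‹y1.2 = y2.2›
    _ = r * (1 - x)⁻¹ * (1 - Y)⁻¹ * r ^ ((1 + α + β) * (M : ℝ)) := by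
        rw [Real.rpow_add hr0, Real.rpow_one]
        ring

/-- Constant for the core bound. -/
noncomputable def coreConst (F : Type*) [Field F] [Fintype F] (α β : ℝ) : ℝ :=
  (Fintype.card F : ℝ) * ((1 - (Fintype.card F : ℝ) ^ (-(1 + α)))⁻¹
      + (1 - (Fintype.card F : ℝ) ^ (-(1 + β)))⁻¹)
    * (1 - (Fintype.card F : ℝ) ^ (1 + α + β))⁻¹

lemma coreConst_pos (α β : ℝ) (hα : 0 < 1 + α) (hβ : 0 < 1 + β) (hs : 1 + α + β < 0) :
    0 < coreConst F α β := by
  have hq : 1 < Fintype.card F := Fintype.one_lt_card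
  have hr1 : (1 : ℝ) < (Fintype.card F : ℝ) := by exact_mod_cast hq
  have h1 : (Fintype.card F : ℝ) ^ (-(1 + α)) < 1 :=
    Real.rpow_lt_one_of_one_lt_of_neg hr1 (by linarith)
  have h2 : (Fintype.card F : ℝ) ^ (-(1 + β)) < 1 :=
    Real.rpow_lt_one_of_one_lt_of_neg hr1 (by linarith)
  have h3 : (Fintype.card F : ℝ) ^ (1 + α + β) < 1 :=
    Real.rpow_lt_one_of_one_lt_of_neg hr1 hs
  have : (0:ℝ) < Fintype.card F := by linarith
  unfold coreConst
  have i1 : 0 < (1 - (Fintype.card F : ℝ) ^ (-(1 + α)))⁻¹ := by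
    apply inv_pos.mpr; linarith
  have i2 : 0 < (1 - (Fintype.card F : ℝ) ^ (-(1 + β)))⁻¹ := by
    apply inv_pos.mpr; linarith
  have i3 : 0 < (1 - (Fintype.card F : ℝ) ^ (1 + α + β))⁻¹ := by
    apply inv_pos.mpr; linarith
  positivity

/-- Core finite-sum bound. -/
lemma core (m : Polynomial F) (α β : ℝ)
    (hα : 0 < 1 + α) (hβ : 0 < 1 + β) (hs : 1 + α + β < 0)
    (s : Finset (Polynomial F)) :
    ∑ p ∈ s, (Fintype.card F : ℝ) ^ (α * p.natDegree + β * (m - p).natDegree)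
      ≤ coreConst F α β * (Fintype.card F : ℝ) ^ ((1 + α + β) * m.natDegree) := by
  classical
  set r : ℝ := (Fintype.card F : ℝ) with hrdef
  set s₁ := s.filter (fun p => p.natDegree ≤ (m - p).natDegree) with hs₁
  set s₂ := s.filter (fun p => ¬ p.natDegree ≤ (m - p).natDegree) with hs₂
  have hsplit : ∑ p ∈ s, r ^ (α * p.natDegree + β * (m - p).natDegree)
      = ∑ p ∈ s₁, r ^ (α * p.natDegree + β * (m - p).natDegree)
        + ∑ p ∈ s₂, r ^ (α * p.natDegree + β * (m - p).natDegree) :=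
    (Finset.sum_filter_add_sum_filter_not s _ _).symm
  have b1 : ∑ p ∈ s₁, r ^ (α * p.natDegree + β * (m - p).natDegree)
      ≤ r * (1 - r ^ (-(1 + α)))⁻¹ * (1 - r ^ (1 + α + β))⁻¹
        * r ^ ((1 + α + β) * m.natDegree) := by
    apply branch m α β hα hs
    intro p hp
    exact (Finset.mem_filter.mp hp).2
  have b2 : ∑ p ∈ s₂, r ^ (α * p.natDegree + β * (m - p).natDegree)
      ≤ r * (1 - r ^ (-(1 + β)))⁻¹ * (1 - r ^ (1 + β + α))⁻¹
        * r ^ ((1 + β + α) * m.natDegree) := by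
    have himg : ∑ p ∈ s₂, r ^ (α * p.natDegree + β * (m - p).natDegree)
        = ∑ p ∈ s₂.image (fun p => m - p),
            r ^ (β * p.natDegree + α * (m - p).natDegree) := by
      rw [Finset.sum_image (fun a _ b _ h => by
        have : m - (m - a) = m - (m - b) := by rw [h]
        simpa using this)]
      apply Finset.sum_congr rfl
      intro p _
      rw [sub_sub_cancel]
      ring_nf
    rw [himg]
    apply branch m β α hβ (by linarith)
    intro p hp
    obtain ⟨q, hq, rfl⟩ := Finset.mem_image.mp hp
    rw [sub_sub_cancel]
    have := (Finset.mem_filter.mp hq).2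
    omega
  rw [hsplit]
  have : (1 + β + α) = (1 + α + β) := by ring
  rw [this] at b2
  calc _ ≤ r * (1 - r ^ (-(1 + α)))⁻¹ * (1 - r ^ (1 + α + β))⁻¹ * r ^ ((1 + α + β) * m.natDegree)
        + r * (1 - r ^ (-(1 + β)))⁻¹ * (1 - r ^ (1 + α + β))⁻¹ * r ^ ((1 + α + β) * m.natDegree) :=
        add_le_add b1 b2
    _ = coreConst F α β * r ^ ((1 + α + β) * m.natDegree) := by
        unfold coreConst
        ring

end Stmt18

open Stmt18

/-- Key bound `Δ(Q_n) ≪ q^{-(2/11) deg n}`: with `γ = 7/11`, for all nonzero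
`n ∈ F_q[t]` of sufficiently large degree,
`∑_{x1 ≠ 0} q^{-γ deg x1} (∑_{x2+x3 = n - x1, x2 x3 ≠ 0} q^{-γ(deg x2 + deg x3)})²
  ≤ C q^{(3-5γ) deg n} = C q^{-(2/11) deg n}`. -/
theorem stmt_18 (F : Type*) [Field F] [Fintype F] :
    ∃ C : ℝ, 0 < C ∧ ∃ D : ℕ, ∀ n : Polynomial F, n ≠ 0 → D ≤ n.natDegree →
      ∑' x1 : {x : Polynomial F // x ≠ 0},
          (Fintype.card F : ℝ) ^ (-(7 / 11 : ℝ) * (((x1 : Polynomial F)).natDegree : ℝ)) *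
            (∑' x2 : {x : Polynomial F // x ≠ 0 ∧ n - (x1 : Polynomial F) - x ≠ 0},
              (Fintype.card F : ℝ) ^ (-(7 / 11 : ℝ) *
                (((x2 : Polynomial F).natDegree : ℝ) +
                  ((n - (x1 : Polynomial F) - (x2 : Polynomial F)).natDegree : ℝ)))) ^ 2
        ≤ C * (Fintype.card F : ℝ) ^ ((3 - 5 * (7 / 11 : ℝ)) * (n.natDegree : ℝ)) := by
  classical
  set r : ℝ := (Fintype.card F : ℝ) with hrdef
  have hq : 1 < Fintype.card F := Fintype.one_lt_card
  have hr1 : (1 : ℝ) < r := by rw [hrdef]; exact_mod_cast hq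
  have hr0 : (0 : ℝ) < r := lt_trans one_pos hr1
  have hαin : (0:ℝ) < 1 + (-(7/11)) := by norm_num
  have hsin : (1:ℝ) + (-(7/11)) + (-(7/11)) < 0 := by norm_num
  have hαout : (0:ℝ) < 1 + (-(7/11)) := by norm_num
  have hβout : (0:ℝ) < 1 + (-(6/11)) := by norm_num
  have hsout : (1:ℝ) + (-(7/11)) + (-(6/11)) < 0 := by norm_num
  set Kin : ℝ := coreConst F (-(7/11)) (-(7/11)) with hKin
  set Kout : ℝ := coreConst F (-(7/11)) (-(6/11)) with hKout
  have hKinpos : 0 < Kin := coreConst_pos _ _ hαin hαin hsin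
  have hKoutpos : 0 < Kout := coreConst_pos _ _ hαout hβout hsout
  refine ⟨Kout * Kin ^ 2, by positivity, 0, fun n hn _ => ?_⟩
  -- inner bound, for any m
  have inner_le : ∀ m : Polynomial F,
      ∑' x2 : {x : Polynomial F // x ≠ 0 ∧ m - x ≠ 0},
        r ^ (-(7 / 11 : ℝ) * (((x2 : Polynomial F).natDegree : ℝ)
          + ((m - (x2 : Polynomial F)).natDegree : ℝ)))
      ≤ Kin * r ^ ((1 + (-(7/11)) + (-(7/11))) * (m.natDegree : ℝ)) := by
    intro m
    apply tsum_le_of_sum_le' (by positivity)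
    intro u
    have himg : ∑ x2 ∈ u, r ^ (-(7 / 11 : ℝ) * (((x2 : Polynomial F).natDegree : ℝ)
          + ((m - (x2 : Polynomial F)).natDegree : ℝ)))
        = ∑ p ∈ u.image (fun z : {x : Polynomial F // x ≠ 0 ∧ m - x ≠ 0} => (z : Polynomial F)),
            r ^ ((-(7/11) : ℝ) * p.natDegree + (-(7/11) : ℝ) * (m - p).natDegree) := by
      rw [Finset.sum_image (fun a _ b _ h => Subtype.ext h)]
      apply Finset.sum_congr rfl
      intro z _
      congr 1
      ring
    rw [himg]
    exact core m _ _ hαin hαin hsin _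
  -- outer bound
  apply tsum_le_of_sum_le' (by positivity)
  intro u
  have term_le : ∀ x1 : {x : Polynomial F // x ≠ 0},
      r ^ (-(7 / 11 : ℝ) * (((x1 : Polynomial F)).natDegree : ℝ)) *
        (∑' x2 : {x : Polynomial F // x ≠ 0 ∧ n - (x1 : Polynomial F) - x ≠ 0},
          r ^ (-(7 / 11 : ℝ) * (((x2 : Polynomial F).natDegree : ℝ)
            + ((n - (x1 : Polynomial F) - (x2 : Polynomial F)).natDegree : ℝ)))) ^ 2
      ≤ Kin ^ 2 * r ^ ((-(7/11) : ℝ) * ((x1 : Polynomial F)).natDegree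
          + (-(6/11) : ℝ) * ((n - (x1 : Polynomial F)).natDegree : ℝ)) := by
    intro x1
    have hS0 : (0:ℝ) ≤ ∑' x2 : {x : Polynomial F // x ≠ 0 ∧ n - (x1 : Polynomial F) - x ≠ 0},
        r ^ (-(7 / 11 : ℝ) * (((x2 : Polynomial F).natDegree : ℝ)
          + ((n - (x1 : Polynomial F) - (x2 : Polynomial F)).natDegree : ℝ))) :=
      tsum_nonneg (fun _ => Real.rpow_nonneg hr0.le _)
    have hS := inner_le (n - (x1 : Polynomial F))
    have hsq : (∑' x2 : {x : Polynomial F // x ≠ 0 ∧ n - (x1 : Polynomial F) - x ≠ 0},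
          r ^ (-(7 / 11 : ℝ) * (((x2 : Polynomial F).natDegree : ℝ)
            + ((n - (x1 : Polynomial F) - (x2 : Polynomial F)).natDegree : ℝ)))) ^ 2
        ≤ (Kin * r ^ ((1 + (-(7/11)) + (-(7/11))) * (((n - (x1 : Polynomial F)).natDegree : ℝ)))) ^ 2 :=
      pow_le_pow_left₀ hS0 hS 2
    calc r ^ (-(7 / 11 : ℝ) * (((x1 : Polynomial F)).natDegree : ℝ)) *
          (∑' x2 : {x : Polynomial F // x ≠ 0 ∧ n - (x1 : Polynomial F) - x ≠ 0},
            r ^ (-(7 / 11 : ℝ) * (((x2 : Polynomial F).natDegree : ℝ)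
              + ((n - (x1 : Polynomial F) - (x2 : Polynomial F)).natDegree : ℝ)))) ^ 2
        ≤ r ^ (-(7 / 11 : ℝ) * (((x1 : Polynomial F)).natDegree : ℝ)) *
            (Kin * r ^ ((1 + (-(7/11)) + (-(7/11))) * (((n - (x1 : Polynomial F)).natDegree : ℝ)))) ^ 2 :=
          mul_le_mul_of_nonneg_left hsq (Real.rpow_nonneg hr0.le _)
      _ = Kin ^ 2 * r ^ ((-(7/11) : ℝ) * ((x1 : Polynomial F)).natDegree
            + (-(6/11) : ℝ) * ((n - (x1 : Polynomial F)).natDegree : ℝ)) := by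
          rw [mul_pow, ← Real.rpow_natCast
            (r ^ ((1 + (-(7/11)) + (-(7/11))) * (((n - (x1 : Polynomial F)).natDegree : ℝ)))) 2,
            ← Real.rpow_mul hr0.le, mul_left_comm, ← Real.rpow_add hr0]
          congr 1
          push_cast
          ring_nf
  calc ∑ x1 ∈ u, r ^ (-(7 / 11 : ℝ) * (((x1 : Polynomial F)).natDegree : ℝ)) *
          (∑' x2 : {x : Polynomial F // x ≠ 0 ∧ n - (x1 : Polynomial F) - x ≠ 0},
            r ^ (-(7 / 11 : ℝ) * (((x2 : Polynomial F).natDegree : ℝ)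
              + ((n - (x1 : Polynomial F) - (x2 : Polynomial F)).natDegree : ℝ)))) ^ 2
      ≤ ∑ x1 ∈ u, Kin ^ 2 * r ^ ((-(7/11) : ℝ) * ((x1 : Polynomial F)).natDegree
            + (-(6/11) : ℝ) * ((n - (x1 : Polynomial F)).natDegree : ℝ)) :=
        Finset.sum_le_sum (fun x1 _ => term_le x1)
    _ = Kin ^ 2 * ∑ p ∈ u.image (fun z : {x : Polynomial F // x ≠ 0} => (z : Polynomial F)),
          r ^ ((-(7/11) : ℝ) * p.natDegree + (-(6/11) : ℝ) * ((n - p).natDegree : ℝ)) := by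
        rw [← Finset.mul_sum, Finset.sum_image (fun a _ b _ h => Subtype.ext h)]
    _ ≤ Kin ^ 2 * (Kout * r ^ ((1 + (-(7/11)) + (-(6/11))) * (n.natDegree : ℝ))) := by
        apply mul_le_mul_of_nonneg_left _ (by positivity)
        exact core n _ _ hαout hβout hsout _
    _ = Kout * Kin ^ 2 * r ^ ((3 - 5 * (7 / 11 : ℝ)) * (n.natDegree : ℝ)) := by
        rw [show (1 + (-(7/11)) + (-(6/11)) : ℝ) = (3 - 5 * (7 / 11 : ℝ)) by norm_num]
        ring
end
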